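/- arXiv:1207.0569 — 10 statements merged into one kernel-verified Lean document; each statement's English description precedes it below -/
import Mathlib

section
/- Let L/K be a finite Galois extension of fields with Galois group G, and let V be an L-vector space equipped with a semi-linear action of G, i.e. g(v+w)=g(v)+g(w) and g(av)=g(a)g(v) for all a∈L, v,w∈V, g∈G. Then the natural L-linear map L ⊗_K V^G → V, a⊗v ↦ av, is an isomorphism (Speiser's lemma). -/
open scoped TensorProduct

/-- Dedekind independence for `K`-algebra automorphisms of `L`. -/
lemma speiser_dedekind (K L : Type*) [Field K] [Field L] [Algebra K L] :
    LinearIndependent L (fun g : L ≃ₐ[K] L => (g : L → L)) := by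
  have h1 := linearIndependent_monoidHom L L
  exact h1.comp (fun g : L ≃ₐ[K] L => (g : L →* L))
    (fun g h e => by ext x; simpa using DFunLike.congr_fun e x)

open scoped Classical in
/-- Existence of a "Dirac delta at 1" combination: finitely many `aᵢ, bᵢ ∈ L` with
`∑ aᵢ * g bᵢ = δ_{g,1}`. -/
lemma speiser_delta (K L : Type*) [Field K] [Field L] [Algebra K L]
    [FiniteDimensional K L] [IsGalois K L] :
    ∃ c : L →₀ L, ∀ g : L ≃ₐ[K] L,
      (c.sum fun b a => a * g b) = if g = 1 then 1 else 0 := by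
  classical
  set v : L → ((L ≃ₐ[K] L) → L) := fun b g => g b with hv
  have hspan : Submodule.span L (Set.range v) = ⊤ := by
    by_contra h
    obtain ⟨f, hf0, hf⟩ := Submodule.exists_dual_map_eq_bot_of_lt_top
      (lt_top_iff_ne_top.2 h) inferInstance
    have hvanish : ∀ b : L, f (v b) = 0 := by
      intro b
      have : f (v b) ∈ (Submodule.span L (Set.range v)).map f :=
        Submodule.mem_map_of_mem (Submodule.subset_span ⟨b, rfl⟩)
      rw [hf] at this
      exact (Submodule.mem_bot L).1 this
    have hcoef : ∀ g : L ≃ₐ[K] L,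
        f (Pi.single g (1 : L) : (L ≃ₐ[K] L) → L) = 0 := by
      have hli := speiser_dedekind K L
      have key : ∑ g : L ≃ₐ[K] L,
          f (Pi.single g (1 : L) : (L ≃ₐ[K] L) → L) • (g : L → L) = 0 := by
        funext b
        have hvb : v b = ∑ g : L ≃ₐ[K] L,
            (g b) • (Pi.single g (1 : L) : (L ≃ₐ[K] L) → L) := by
          funext h
          simp [hv, Pi.single_apply, mul_comm]
        have h2 := hvanish b
        rw [hvb, map_sum] at h2
        simp only [map_smul, smul_eq_mul] at h2
        simpa [Finset.sum_apply, mul_comm] using h2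
      intro g
      exact Fintype.linearIndependent_iff.1 hli _ key g
    apply hf0
    refine LinearMap.ext fun x => ?_
    have hx : x = ∑ g : L ≃ₐ[K] L,
        (x g) • (Pi.single g (1 : L) : (L ≃ₐ[K] L) → L) := by
      funext h
      simp [Pi.single_apply]
    rw [hx, map_sum]
    simp [hcoef]
  have hmem : (fun g : L ≃ₐ[K] L => if g = 1 then (1 : L) else 0)
      ∈ Submodule.span L (Set.range v) := by
    rw [hspan]; trivial
  obtain ⟨c, hc⟩ := Finsupp.mem_span_range_iff_exists_finsupp.1 hmem
  refine ⟨c, fun g => ?_⟩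
  have := congrFun hc g
  rw [← this]
  simp [Finsupp.sum_apply, Finsupp.sum, hv]

/-- **Speiser's lemma.** Let `L/K` be a finite Galois extension of fields with Galois
group `G = L ≃ₐ[K] L`, and let `V` be an `L`-vector space equipped with a semi-linear
action `ρ` of `G` (additive and satisfying `ρ g (a • v) = g a • ρ g v`).  Then the
natural `L`-linear map `L ⊗[K] V^G → V`, `a ⊗ v ↦ a • v`, is an isomorphism. -/
theorem speiser_lemma
    (K L : Type*) [Field K] [Field L] [Algebra K L]
    [FiniteDimensional K L] [IsGalois K L]
    (V : Type*) [AddCommGroup V] [Module K V] [Module L V] [IsScalarTower K L V]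
    (ρ : (L ≃ₐ[K] L) → V → V)
    (hone : ∀ v, ρ 1 v = v)
    (hmul : ∀ g h v, ρ (g * h) v = ρ g (ρ h v))
    (hadd : ∀ g v w, ρ g (v + w) = ρ g v + ρ g w)
    (hsmul : ∀ g (a : L) v, ρ g (a • v) = g a • ρ g v)
    (VG : Submodule K V)
    (hVG : ∀ v, v ∈ VG ↔ ∀ g, ρ g v = v) :
    Function.Bijective (VG.subtype.liftBaseChange L) := by
  classical
  obtain ⟨c, hc⟩ := speiser_delta K L
  have hKsmul : ∀ g (k : K) (v : V), ρ g (k • v) = k • ρ g v := by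
    intro g k v
    rw [← algebraMap_smul L k v, hsmul, AlgEquiv.commutes, algebraMap_smul]
  -- the "trace" map into invariants
  set t : L → V → V := fun b v => ∑ g : L ≃ₐ[K] L, g b • ρ g v with ht
  have ht_mem : ∀ b v, t b v ∈ VG := by
    intro b v
    rw [hVG]
    intro h
    show ρ h (t b v) = t b v
    have hΦ : ρ h (∑ g : L ≃ₐ[K] L, g b • ρ g v)
        = ∑ g : L ≃ₐ[K] L, ρ h (g b • ρ g v) :=
      map_sum (AddMonoidHom.mk' (ρ h) (hadd h)) _ _
    simp only [ht]
    rw [hΦ]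
    exact Fintype.sum_equiv (Equiv.mulLeft h)
      (fun g => ρ h (g b • ρ g v)) (fun g => g b • ρ g v)
      (fun x => by dsimp only [Equiv.coe_mulLeft]; rw [hsmul, ← hmul]; rfl)
  have ht_add : ∀ b v w, t b (v + w) = t b v + t b w := by
    intro b v w
    simp only [ht]
    rw [← Finset.sum_add_distrib]
    refine Finset.sum_congr rfl fun g _ => ?_
    rw [hadd, smul_add]
  have ht_ksmul : ∀ b (k : K) v, t b (k • v) = k • t b v := by
    intro b k v
    simp only [ht]
    rw [Finset.smul_sum]
    refine Finset.sum_congr rfl fun g _ => ?_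
    rw [hKsmul, smul_comm]
  -- the inverse map
  set Ψ : V →ₗ[K] L ⊗[K] VG :=
    { toFun := fun v => c.sum fun b a => a ⊗ₜ[K] (⟨t b v, ht_mem b v⟩ : VG)
      map_add' := by
        intro v w
        rw [← Finsupp.sum_add]
        refine Finsupp.sum_congr fun b _ => ?_
        rw [← TensorProduct.tmul_add]
        congr 1
        exact Subtype.ext (ht_add b v w)
      map_smul' := by
        intro k v
        rw [Finsupp.smul_sum]
        refine Finsupp.sum_congr fun b _ => ?_
        rw [← TensorProduct.tmul_smul]
        congr 1
        exact Subtype.ext (ht_ksmul b k v) } with hΨ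
  have hleft : ∀ v, (VG.subtype.liftBaseChange L) (Ψ v) = v := by
    intro v
    rw [hΨ]
    simp only [LinearMap.coe_mk, AddHom.coe_mk]
    rw [map_finsuppSum]
    simp only [LinearMap.liftBaseChange_tmul, Submodule.coe_subtype]
    calc (c.sum fun b a => a • (t b v : V))
        = ∑ b ∈ c.support, ∑ g : L ≃ₐ[K] L, (c b * g b) • ρ g v := by
          refine Finset.sum_congr rfl fun b _ => ?_
          simp only [ht]
          rw [Finset.smul_sum]
          refine Finset.sum_congr rfl fun g _ => ?_
          rw [smul_smul]
      _ = ∑ g : L ≃ₐ[K] L, ∑ b ∈ c.support, (c b * g b) • ρ g v :=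
          Finset.sum_comm
      _ = ∑ g : L ≃ₐ[K] L, (∑ b ∈ c.support, c b * g b) • ρ g v := by
          refine Finset.sum_congr rfl fun g _ => ?_
          rw [Finset.sum_smul]
      _ = ∑ g : L ≃ₐ[K] L, (if g = 1 then (1:L) else 0) • ρ g v := by
          refine Finset.sum_congr rfl fun g _ => ?_
          rw [← hc g]
          rfl
      _ = v := by
          simp only [ite_smul, one_smul, zero_smul]
          rw [Finset.sum_ite_eq' Finset.univ (1 : L ≃ₐ[K] L) (fun g => ρ g v)]
          simp [hone]
  have hright : ∀ x : L ⊗[K] VG, Ψ ((VG.subtype.liftBaseChange L) x) = x := by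
    intro x
    induction x using TensorProduct.induction_on with
    | zero => simp
    | add y z hy hz => rw [map_add, map_add, hy, hz]
    | tmul a w =>
      obtain ⟨w, hw⟩ := w
      rw [LinearMap.liftBaseChange_tmul]
      simp only [Submodule.coe_subtype]
      have hρw : ∀ g, ρ g w = w := (hVG w).1 hw
      have htval : ∀ b : L, t b (a • w) = Algebra.trace K L (b * a) • w := by
        intro b
        have h3 : t b (a • w) = (∑ g : L ≃ₐ[K] L, g (b * a)) • w := by
          simp only [ht]
          rw [Finset.sum_smul]
          refine Finset.sum_congr rfl fun g _ => ?_
          rw [hsmul, hρw, smul_smul, map_mul]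
        rw [h3, ← trace_eq_sum_automorphisms, algebraMap_smul]
      rw [hΨ]
      simp only [LinearMap.coe_mk, AddHom.coe_mk]
      have key : (c.sum fun b cb => cb ⊗ₜ[K] (⟨t b (a • w), ht_mem b (a • w)⟩ : VG))
          = (c.sum fun b cb => (Algebra.trace K L (b * a) • cb) ⊗ₜ[K]
              (⟨w, hw⟩ : VG)) := by
        refine Finsupp.sum_congr fun b _ => ?_
        have h1 : (⟨t b (a • w), ht_mem b (a • w)⟩ : VG)
            = Algebra.trace K L (b * a) • (⟨w, hw⟩ : VG) :=
          Subtype.ext (by simpa using htval b)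
        rw [h1, TensorProduct.tmul_smul, TensorProduct.smul_tmul']
      rw [key]
      rw [Finsupp.sum, ← TensorProduct.sum_tmul]
      congr 1
      calc ∑ b ∈ c.support, Algebra.trace K L (b * a) • c b
          = ∑ b ∈ c.support, (∑ g : L ≃ₐ[K] L, g (b * a)) * c b := by
            refine Finset.sum_congr rfl fun b _ => ?_
            rw [Algebra.smul_def, trace_eq_sum_automorphisms]
        _ = ∑ b ∈ c.support, ∑ g : L ≃ₐ[K] L, (c b * g b) * g a := by
            refine Finset.sum_congr rfl fun b _ => ?_
            rw [Finset.sum_mul]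
            refine Finset.sum_congr rfl fun g _ => ?_
            rw [map_mul]
            ring
        _ = ∑ g : L ≃ₐ[K] L, ∑ b ∈ c.support, (c b * g b) * g a :=
            Finset.sum_comm
        _ = ∑ g : L ≃ₐ[K] L, (∑ b ∈ c.support, c b * g b) * g a := by
            refine Finset.sum_congr rfl fun g _ => ?_
            rw [← Finset.sum_mul]
        _ = ∑ g : L ≃ₐ[K] L, (if g = 1 then (1:L) else 0) * g a := by
            refine Finset.sum_congr rfl fun g _ => ?_
            rw [← hc g]
            rfl
        _ = a := by
            simp only [ite_mul, one_mul, zero_mul]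
            rw [Finset.sum_ite_eq' Finset.univ (1 : L ≃ₐ[K] L) (fun g => g a)]
            simp
  constructor
  · intro x y hxy
    have := congrArg Ψ hxy
    rwa [hright, hright] at this
  · intro v
    exact ⟨Ψ v, hleft v⟩
end

section
/- Let M be a semi-linear O_L[G]-module. Then the cokernel of the natural morphism φ: O_L ⊗_{O_K} M^G → M is killed by the different ideal 𝔇_{L/K}: for every d ∈ 𝔇_{L/K} and every x ∈ M, the element dx lies in the O_L-submodule of M generated by M^G. -/
open scoped nonZeroDivisors

/-- Key identity: for a `K`-basis `c` of a Galois extension `L/K` with trace-dual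
basis `c*`, one has `∑ i, σ (c i) * c* i = if σ = 1 then 1 else 0`. -/
lemma sum_mul_traceForm_dualBasis (K L : Type*) [Field K] [Field L] [Algebra K L]
    [FiniteDimensional K L] [IsGalois K L] {ι : Type*} [Fintype ι] [DecidableEq ι]
    [DecidableEq (L ≃ₐ[K] L)]
    (c : Module.Basis ι K L) (σ : L ≃ₐ[K] L) :
    ∑ i, σ (c i) *
        (Algebra.traceForm K L).dualBasis (traceForm_nondegenerate K L) c i
      = if σ = 1 then 1 else 0 := by
  set cd := (Algebra.traceForm K L).dualBasis (traceForm_nondegenerate K L) c with hcd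
  have expand : ∀ z : L, ∑ τ : L ≃ₐ[K] L, (∑ i, τ (c i) * cd i) * τ z = z := by
    intro z
    have h1 : ∀ τ : L ≃ₐ[K] L, (∑ i, τ (c i) * cd i) * τ z
        = ∑ i, τ (c i * z) * cd i := by
      intro τ
      rw [Finset.sum_mul]
      refine Finset.sum_congr rfl fun i _ => ?_
      rw [map_mul]; ring
    simp_rw [h1]
    rw [Finset.sum_comm]
    have h2 : ∀ i, ∑ τ : L ≃ₐ[K] L, τ (c i * z) * cd i
        = (Algebra.trace K L (c i * z)) • cd i := by
      intro i
      rw [← Finset.sum_mul, ← trace_eq_sum_automorphisms, Algebra.smul_def]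
    simp_rw [h2]
    have h3 : ∀ i, Algebra.trace K L (c i * z) = cd.repr z i := by
      intro i
      rw [hcd, LinearMap.BilinForm.dualBasis_repr_apply, Algebra.traceForm_apply, mul_comm]
    simp_rw [h3]
    exact cd.sum_repr z
  let e : (L ≃ₐ[K] L) → (L →* L) := fun τ => (τ.toAlgHom.toRingHom : L →+* L).toMonoidHom
  have einj : Function.Injective e := by
    intro τ₁ τ₂ h
    ext z
    exact DFunLike.congr_fun h z
  have li : LinearIndependent L (fun τ : L ≃ₐ[K] L => ((e τ : L → L))) :=
    (linearIndependent_monoidHom L L).comp e einj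
  have key := Fintype.linearIndependent_iff.mp li
    (fun τ => (∑ i, τ (c i) * cd i) - (if τ = 1 then 1 else 0)) ?_ σ
  · exact sub_eq_zero.mp key
  · funext z
    have : ∀ τ : L ≃ₐ[K] L,
        (((∑ i, τ (c i) * cd i) - (if τ = 1 then 1 else 0)) • (e τ : L → L)) z
        = (∑ i, τ (c i) * cd i) * τ z - (if τ = 1 then 1 else 0) * τ z := by
      intro τ
      simp [e, sub_mul, smul_eq_mul]
    rw [Finset.sum_apply, Pi.zero_apply]
    simp_rw [this]
    rw [Finset.sum_sub_distrib, expand z]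
    have : ∑ τ : L ≃ₐ[K] L, (if τ = 1 then (1:L) else 0) * τ z = z := by
      rw [Finset.sum_eq_single (1 : L ≃ₐ[K] L)]
      · simp
      · intro τ _ hτ; simp [hτ]
      · intro h; exact absurd (Finset.mem_univ _) h
    rw [this, sub_self]

/-- Let `A = O_K` be a discrete valuation ring with fraction field `K`, `L/K` a finite
Galois extension with group `G = L ≃ₐ[K] L`, and `B = O_L` the integral closure of `A`
in `L`.  Let `M` be a semi-linear `B[G]`-module.  Then the cokernel of the natural map
`φ : B ⊗[A] M^G → M` is killed by the different ideal `𝔇_{L/K}`: for every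
`d ∈ 𝔇_{L/K}` and every `x ∈ M`, the element `d • x` lies in the `B`-submodule of `M`
generated by the `G`-invariants `M^G`. -/
theorem different_kills_cokernel
    (A K L B : Type*) [CommRing A] [CommRing B] [Field K] [Field L]
    [IsDomain A] [IsDiscreteValuationRing A] [IsIntegrallyClosed A]
    [Algebra A K] [IsFractionRing A K]
    [Algebra K L] [FiniteDimensional K L] [IsGalois K L]
    [Algebra A B] [Algebra B L] [Algebra A L]
    [IsScalarTower A B L] [IsScalarTower A K L]
    [IsIntegralClosure B A L] [IsDomain B]
    [IsDedekindDomain B] [NoZeroSMulDivisors A B]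
    (M : Type*) [AddCommGroup M] [Module B M] [Module A M] [IsScalarTower A B M]
    (ρ : (L ≃ₐ[K] L) → M → M)
    (hone : ∀ x, ρ 1 x = x)
    (hmul : ∀ g h x, ρ (g * h) x = ρ g (ρ h x))
    (hadd : ∀ g x y, ρ g (x + y) = ρ g x + ρ g y)
    (hsmul : ∀ g (b : B) x, ρ g (b • x) = galRestrict A K L B g b • ρ g x) :
    ∀ d ∈ differentIdeal A B, ∀ x : M,
      d • x ∈ Submodule.span B {y : M | ∀ g, ρ g y = y} := by
  classical
  intro d hd x
  -- Instances
  haveI : Module.IsTorsionFree A K :=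
    Module.isTorsionFree_iff_algebraMap_injective.mpr (IsFractionRing.injective A K)
  haveI : Module.IsTorsionFree A L := Module.IsTorsionFree.trans_faithfulSMul A K L
  haveI := IsIntegralClosure.isFractionRing_of_finite_extension A K L B
  haveI := IsIntegralClosure.isLocalization A K L B
  haveI : Module.Free A B := IsIntegralClosure.module_free A K L B
  haveI : IsNoetherian A B := IsIntegralClosure.isNoetherian A K L B
  haveI : Module.Finite A B := Module.Finite.of_basis (Module.Free.chooseBasis A B)
  -- Bases
  set ι := Module.Free.ChooseBasisIndex A B with hι
  let b : Module.Basis ι A B := Module.Free.chooseBasis A B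
  let c : Module.Basis ι K L := b.localizationLocalization K A⁰ L
  have hc : ∀ i, c i = algebraMap B L (b i) :=
    fun i => b.localizationLocalization_apply K A⁰ L i
  set cd := (Algebra.traceForm K L).dualBasis (traceForm_nondegenerate K L) c with hcd
  -- the dual basis lies in the trace dual of B
  have hcd_mem : ∀ i, cd i ∈ Submodule.traceDual A K (1 : Submodule B L) := by
    intro i
    rw [Submodule.mem_traceDual]
    intro a ha
    rw [Submodule.mem_one] at ha
    obtain ⟨y, rfl⟩ := ha
    have hy : algebraMap B L y = ∑ j, algebraMap A K (b.repr y j) • c j := by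
      conv_lhs => rw [← c.sum_repr (algebraMap B L y)]
      refine Finset.sum_congr rfl fun j _ => ?_
      rw [b.localizationLocalization_repr_algebraMap K A⁰ L]
    rw [Algebra.traceForm_apply, hy, Finset.mul_sum, map_sum]
    have : ∀ j, Algebra.trace K L (cd i * algebraMap A K (b.repr y j) • c j)
        = algebraMap A K (b.repr y j) * (if j = i then 1 else 0) := by
      intro j
      rw [mul_smul_comm, map_smul, smul_eq_mul]
      congr 1
      have := LinearMap.BilinForm.apply_dualBasis_left
        (B := Algebra.traceForm K L) (traceForm_nondegenerate K L) c i j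
      rwa [Algebra.traceForm_apply] at this
    simp_rw [this]
    rw [Finset.sum_eq_single i]
    · exact ⟨b.repr y i, by simp⟩
    · intro j _ hj; simp [hj]
    · intro h; exact absurd (Finset.mem_univ _) h
  -- d times the dual basis is integral
  have hβ : ∀ i, ∃ y : B, algebraMap B L y = algebraMap B L d * cd i := by
    intro i
    have hdmem : algebraMap B L d ∈
        (1 / Submodule.traceDual A K (1 : Submodule B L) : Submodule B L) := by
      rw [← coeSubmodule_differentIdeal A K]
      exact Submodule.mem_map_of_mem hd
    have := Submodule.mem_div_iff_forall_mul_mem.mp hdmem _ (hcd_mem i)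
    rwa [Submodule.mem_one] at this
  choose β hβ using hβ
  -- invariant elements
  have hρ0 : ∀ g, ρ g 0 = 0 := by
    intro g
    have := hadd g 0 0
    rw [add_zero] at this
    exact add_eq_left.mp this.symm
  let φ : (L ≃ₐ[K] L) → (M →+ M) := fun g => AddMonoidHom.mk' (ρ g) (hadd g)
  have t_mem : ∀ i, (∑ σ : L ≃ₐ[K] L, ρ σ (b i • x)) ∈ {y : M | ∀ g, ρ g y = y} := by
    intro i g
    have : ρ g (∑ σ : L ≃ₐ[K] L, ρ σ (b i • x))
        = ∑ σ : L ≃ₐ[K] L, ρ (g * σ) (b i • x) := by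
      rw [show ρ g (∑ σ : L ≃ₐ[K] L, ρ σ (b i • x))
          = φ g (∑ σ : L ≃ₐ[K] L, ρ σ (b i • x)) from rfl, map_sum]
      exact Finset.sum_congr rfl fun σ _ => (hmul g σ _).symm
    rw [this]
    exact Fintype.sum_equiv (Equiv.mulLeft g) _ _ (fun σ => rfl)
  -- main computation
  have hγ : ∀ σ : L ≃ₐ[K] L,
      ∑ i, β i * (galRestrict A K L B σ) (b i) = if σ = 1 then d else 0 := by
    intro σ
    apply IsIntegralClosure.algebraMap_injective B A L
    rw [map_sum]
    have : ∀ i, algebraMap B L (β i * (galRestrict A K L B σ) (b i))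
        = algebraMap B L d * (σ (c i) * cd i) := by
      intro i
      rw [map_mul, hβ i, algebraMap_galRestrict_apply, ← hc i]
      ring
    simp_rw [this]
    rw [← Finset.mul_sum, sum_mul_traceForm_dualBasis K L c σ]
    split <;> simp
  have main : d • x = ∑ i, β i • (∑ σ : L ≃ₐ[K] L, ρ σ (b i • x)) := by
    have step : ∀ i, β i • (∑ σ : L ≃ₐ[K] L, ρ σ (b i • x))
        = ∑ σ : L ≃ₐ[K] L, (β i * (galRestrict A K L B σ) (b i)) • ρ σ x := by
      intro i
      rw [Finset.smul_sum]
      refine Finset.sum_congr rfl fun σ _ => ?_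
      rw [hsmul, smul_smul]
    simp_rw [step]
    rw [Finset.sum_comm]
    have : ∀ σ : L ≃ₐ[K] L,
        ∑ i, (β i * (galRestrict A K L B σ) (b i)) • ρ σ x
        = (if σ = 1 then d else 0) • ρ σ x := by
      intro σ
      rw [← Finset.sum_smul, hγ σ]
    simp_rw [this]
    rw [Finset.sum_eq_single (1 : L ≃ₐ[K] L)]
    · rw [if_pos rfl, hone]
    · intro σ _ hσ; rw [if_neg hσ, zero_smul]
    · intro h; exact absurd (Finset.mem_univ _) h
  rw [main]
  exact Submodule.sum_mem _ fun i _ =>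
    Submodule.smul_mem _ _ (Submodule.subset_span (t_mem i))
end

section
/- Suppose O_L is monogenic over O_K, say O_L = O_K[θ]. Let M = O_L[G], made into a semi-linear O_L[G]-module by σ(Σ_τ λ_τ·τ) := Σ_τ σ(λ_τ)·(στ), with right O_L-module structure (Σ_τ λ_τ·τ)*μ := Σ_τ λ_τ τ(μ)·τ. If b ∈ O_L satisfies bM ⊆ O_L·M^G (the left O_L-submodule of M generated by the G-invariants M^G), then b ∈ 𝔇_{L/K}. In particular the annihilation bound of the previous proposition by the different is sharp for monogenic extensions. -/
open Polynomial

/-- Sharpness of the different bound for monogenic extensions.  Suppose `B = O_L` is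
monogenic over `A = O_K`, say `B = A[θ]`.  Let `M = B[G]` (encoded as functions
`G → B`), made into a semi-linear `B[G]`-module by
`σ(Σ_τ λ_τ·τ) := Σ_τ σ(λ_τ)·(στ)`, i.e. `(σ ⋆ f)(τ) = σ(f(σ⁻¹τ))`, with the left
(pointwise) `B`-module structure.  If `b ∈ B` satisfies `b • M ⊆ B·M^G` (the left
`B`-submodule generated by the `G`-invariants), then `b` lies in the different ideal
`𝔇_{L/K}`. -/
theorem mem_differentIdeal_of_smul_groupAlgebra_mem_span_invariants
    (A K L B : Type*) [CommRing A] [CommRing B] [Field K] [Field L]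
    [IsDomain A] [IsDiscreteValuationRing A] [IsIntegrallyClosed A]
    [Algebra A K] [IsFractionRing A K]
    [Algebra K L] [FiniteDimensional K L] [IsGalois K L]
    [Algebra A B] [Algebra B L] [Algebra A L]
    [IsScalarTower A B L] [IsScalarTower A K L]
    [IsIntegralClosure B A L] [IsDomain B]
    [IsDedekindDomain B] [NoZeroSMulDivisors A B]
    (θ : B) (hθ : Algebra.adjoin A {θ} = ⊤)
    (b : B)
    (hb : ∀ f : (L ≃ₐ[K] L) → B,
      b • f ∈ Submodule.span B
        {f : (L ≃ₐ[K] L) → B | ∀ σ : L ≃ₐ[K] L,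
          (fun τ => galRestrict A K L B σ (f (σ⁻¹ * τ))) = f}) :
    b ∈ differentIdeal A B := by
  classical
  have _ : IsFractionRing B L := IsIntegralClosure.isFractionRing_of_finite_extension A K L B
  have hθint : IsIntegral A θ := IsIntegralClosure.isIntegral A L θ
  -- Step 1: `θ` generates `L` over `K`.
  have hθL : Algebra.adjoin K {algebraMap B L θ} = ⊤ := by
    have hBmem : ∀ y : B, algebraMap B L y ∈ Algebra.adjoin K {algebraMap B L θ} := by
      intro y
      have h1 : algebraMap B L y ∈ (Algebra.adjoin A {θ}).map (IsScalarTower.toAlgHom A B L) :=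
        hθ ▸ ⟨y, trivial, rfl⟩
      rw [AlgHom.map_adjoin] at h1
      have h2 : Algebra.adjoin A {(IsScalarTower.toAlgHom A B L) θ}
          ≤ (Algebra.adjoin K {algebraMap B L θ}).restrictScalars A := by
        apply Algebra.adjoin_le
        simpa using Algebra.subset_adjoin (R := K) (s := {algebraMap B L θ}) rfl
      simpa using h2 (by simpa using h1)
    rw [eq_top_iff]
    rintro x -
    have := IsIntegralClosure.isLocalization A K L B
    obtain ⟨⟨y, s⟩, hx⟩ := IsLocalization.surj (Algebra.algebraMapSubmonoid B (nonZeroDivisors A)) x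
    obtain ⟨a, ha, hs⟩ := s.2
    have hsL : algebraMap B L s.1 = algebraMap K L (algebraMap A K a) := by
      rw [← hs, ← IsScalarTower.algebraMap_apply, IsScalarTower.algebraMap_apply A K L]
    have ha0 : algebraMap A K a ≠ 0 := by
      simpa [map_eq_zero_iff _ (IsFractionRing.injective A K)] using nonZeroDivisors.ne_zero ha
    have hc0 : algebraMap K L (algebraMap A K a) ≠ 0 := (_root_.map_ne_zero _).mpr ha0
    have hxe : x = algebraMap B L y * algebraMap K L (algebraMap A K a)⁻¹ := by
      rw [map_inv₀]
      field_simp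
      rw [← hsL]
      simpa [mul_comm] using hx
    rw [hxe]
    exact mul_mem (hBmem y) (Subalgebra.algebraMap_mem _ _)
  -- Step 2: the conjugates of `θ` in `B` are pairwise distinct.
  have hinj : Function.Injective (fun τ : L ≃ₐ[K] L => galRestrict A K L B τ θ) := by
    intro σ τ h
    have h' : galRestrict A K L B σ θ = galRestrict A K L B τ θ := h
    have hL := congrArg (algebraMap B L) h'
    rw [algebraMap_galRestrict_apply, algebraMap_galRestrict_apply] at hL
    have : σ.toAlgHom = τ.toAlgHom :=
      AlgHom.ext_of_adjoin_eq_top hθL (by rintro x rfl; exact hL)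
    exact AlgEquiv.ext fun x => AlgHom.ext_iff.mp this x
  -- Step 3: `#G = deg (minpoly A θ)`.
  have hcard : Fintype.card (L ≃ₐ[K] L) = (minpoly A θ).natDegree := by
    have hLint : IsIntegral K (algebraMap B L θ) := IsIntegral.of_finite K _
    have htop : IntermediateField.adjoin K {algebraMap B L θ} = ⊤ := by
      rw [← IntermediateField.toSubalgebra_injective.eq_iff,
        IntermediateField.adjoin_simple_toSubalgebra_of_isAlgebraic hLint.isAlgebraic, hθL,
        IntermediateField.top_toSubalgebra]
    have h1 : (minpoly K (algebraMap B L θ)).natDegree = (minpoly A θ).natDegree := by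
      rw [minpoly.isIntegrallyClosed_eq_field_fractions K L hθint,
        (minpoly.monic hθint).natDegree_map]
    rw [← Nat.card_eq_fintype_card, IsGalois.card_aut_eq_finrank, ← h1, ← IntermediateField.adjoin.finrank hLint,
      htop, IntermediateField.finrank_top']
  -- Step 4: extract a finite linear combination from hypothesis `hb`.
  obtain ⟨n, c, g, hg⟩ := Submodule.mem_span_set'.mp (hb (Pi.single 1 1))
  have hgval : ∀ (i : Fin n) (τ : L ≃ₐ[K] L),
      (g i : (L ≃ₐ[K] L) → B) τ = galRestrict A K L B τ ((g i : (L ≃ₐ[K] L) → B) 1) := by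
    intro i τ
    have h := congrFun ((g i).2 τ) τ
    simpa using h.symm
  have hsum : ∀ τ : L ≃ₐ[K] L,
      (∑ i, c i * galRestrict A K L B τ ((g i : (L ≃ₐ[K] L) → B) 1))
        = if τ = 1 then b else 0 := by
    intro τ
    have h := congrFun hg τ
    simp only [Finset.sum_apply, Pi.smul_apply, smul_eq_mul, Pi.single_apply] at h
    rw [show (if τ = 1 then b else 0) = b * (if τ = 1 then 1 else 0) by split <;> simp, ← h]
    exact Finset.sum_congr rfl fun i _ => by rw [hgval i τ]
  -- Step 5: encode the combination as a polynomial `F` with `F(τθ) = b·δ_{τ,1}`.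
  have hex : ∀ i : Fin n, ∃ Qi : A[X], aeval θ Qi = (g i : (L ≃ₐ[K] L) → B) 1 := by
    intro i
    have hmem : (g i : (L ≃ₐ[K] L) → B) 1 ∈ Algebra.adjoin A {θ} := by rw [hθ]; trivial
    rwa [Algebra.adjoin_singleton_eq_range_aeval, AlgHom.mem_range] at hmem
  choose Q hQ using hex
  set F : B[X] := ∑ i, C (c i) * ((Q i).map (algebraMap A B)) with hFdef
  have hFeval : ∀ τ : L ≃ₐ[K] L,
      F.eval (galRestrict A K L B τ θ) = if τ = 1 then b else 0 := by
    intro τ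
    rw [← hsum τ, hFdef, eval_finset_sum]
    refine Finset.sum_congr rfl fun i _ => ?_
    rw [eval_mul, eval_C, eval_map, ← aeval_def,
      aeval_algHom_apply (galRestrict A K L B τ) θ (Q i), hQ i]
  -- Step 6: divide the minimal polynomial by `X - θ`.
  set Pm : B[X] := (minpoly A θ).map (algebraMap A B) with hPmdef
  have hPm_monic : Pm.Monic := (minpoly.monic hθint).map _
  have hPmroot : Pm.IsRoot θ := by
    simp [hPmdef, IsRoot.def, eval_map, ← aeval_def]
  set q : B[X] := Pm /ₘ (X - C θ) with hqdef
  have hq : (X - C θ) * q = Pm := mul_divByMonic_eq_iff_isRoot.mpr hPmroot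
  have hq_monic : q.Monic := (monic_X_sub_C θ).of_mul_monic_left (by rw [hq]; exact hPm_monic)
  have hq_deg : q.natDegree = (minpoly A θ).natDegree - 1 := by
    have h1 : Pm.natDegree = (minpoly A θ).natDegree := (minpoly.monic hθint).natDegree_map _
    have h2 : Pm.natDegree = 1 + q.natDegree := by
      rw [← hq, natDegree_mul (X_sub_C_ne_zero θ) hq_monic.ne_zero, natDegree_X_sub_C]
    omega
  -- Step 7: `q` vanishes at the conjugates `τθ`, `τ ≠ 1`.
  have hPmeval : ∀ τ : L ≃ₐ[K] L, Pm.eval (galRestrict A K L B τ θ) = 0 := by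
    intro τ
    rw [hPmdef, eval_map, ← aeval_def,
      aeval_algHom_apply (galRestrict A K L B τ) θ (minpoly A θ), minpoly.aeval, map_zero]
  have hqroot : ∀ τ : L ≃ₐ[K] L, τ ≠ 1 → q.eval (galRestrict A K L B τ θ) = 0 := by
    intro τ hτ
    have h := hPmeval τ
    rw [← hq, eval_mul, eval_sub, eval_X, eval_C] at h
    rcases mul_eq_zero.mp h with h' | h'
    · exfalso
      apply hτ
      apply hinj
      show galRestrict A K L B τ θ = galRestrict A K L B 1 θ
      rw [sub_eq_zero] at h'
      rw [h', map_one]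
      rfl
    · exact h'
  -- Step 8: `F %ₘ q = 0`.
  have hR0 : F %ₘ q = 0 := by
    by_cases hR : F %ₘ q = 0
    · exact hR
    exfalso
    apply hR
    have hcard' : Fintype.card {τ : L ≃ₐ[K] L // τ ≠ 1} = (minpoly A θ).natDegree - 1 := by
      rw [Fintype.card_subtype_compl, Fintype.card_subtype_eq (1 : L ≃ₐ[K] L), hcard]
    refine eq_zero_of_natDegree_lt_card_of_eval_eq_zero (F %ₘ q)
      (f := fun τ : {τ : L ≃ₐ[K] L // τ ≠ 1} => galRestrict A K L B τ.1 θ)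
      (fun σ τ h => Subtype.ext (hinj h)) (fun τ => ?_) ?_
    · have hFq := modByMonic_add_div F q
      have := congrArg (Polynomial.eval (galRestrict A K L B τ.1 θ)) hFq
      rw [eval_add, eval_mul, hqroot τ.1 τ.2, hFeval τ.1, if_neg τ.2, zero_mul, add_zero] at this
      exact this
    · rw [hcard']
      have hlt : (F %ₘ q).natDegree < q.natDegree :=
        natDegree_lt_natDegree hR (degree_modByMonic_lt F hq_monic)
      omega
  -- Step 9: conclude.
  have hFθ : F.eval θ = b := by
    have := hFeval 1
    rw [if_pos rfl] at this
    rw [← this]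
    congr 1
    rw [map_one]
    rfl
  have hbeq : b = q.eval θ * (F /ₘ q).eval θ := by
    have hFq := modByMonic_add_div F q
    have := congrArg (Polynomial.eval θ) hFq
    rw [eval_add, eval_mul, hR0, eval_zero, zero_add] at this
    rw [← hFθ, ← this]
  have hqθ : q.eval θ = aeval θ (derivative (minpoly A θ)) := by
    have hd : derivative Pm = q + (X - C θ) * derivative q := by
      rw [← hq, derivative_mul, derivative_sub, derivative_X, derivative_C, sub_zero, one_mul]
    have := congrArg (Polynomial.eval θ) hd
    rw [eval_add, eval_mul, eval_sub, eval_X, eval_C, sub_self, zero_mul, add_zero] at this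
    rw [← this, hPmdef, derivative_map, eval_map, ← aeval_def]
  rw [hbeq, hqθ]
  exact Ideal.mul_mem_right _ _ (aeval_derivative_mem_differentIdeal A K L θ hθL)
end

section
/- Suppose char(K)=0. Let M be a semi-linear O_L[G]-module that is flat over O_L, and let I ⊆ G be the inertia group of G at a maximal ideal of O_L. Then π^{v_K(|I|)}·H^1(G,M) = 0, i.e. the exponent of the O_K-module H^1(G,M) is at most v_K(|I|), the valuation of the integer |I| viewed in O_K. -/
/-!
We prove that `π^{v_K(|I|)}` kills `H¹(G, M)` for a semi-linear `O_L[G]`-module `M`.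

Outline of the proof (which stays entirely integral, inside `B`):

1. Averaging over the inertia subgroup `I` shows that `π^e • c` differs from the
   cocycle `c' := π^e • c + ∂x₁` by a coboundary, where `c'` vanishes on `I`
   (using `Associated (|I| : A) (π^e)`).
2. A cocycle vanishing on `I` is constant on left cosets of `I`.  For any `I`-fixed
   `b : B`, the weighted sum `x₂ = ∑_{q ∈ G/I} σ_{r q}(b) • c'(r q)` over coset
   representatives satisfies `ρ g x₂ - x₂ = -T(b) • c' g` where
   `T(b) = ∑_q σ_{r q} b` is a `G`-fixed element of `B`, hence comes from `A`.
3. The key point is to find an `I`-fixed `b` with `T(b) ∉ P`; then `T(b)` is a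
   unit of the DVR `A` and we can divide, showing `c'` is a coboundary.
   The existence of `b` is the statement that the "inertia field" is unramified
   with separable residue extension, which we prove by hand:
   * (`mem_subgroup_of_fixes_fixedSub`) any `u ∈ G` fixing the `I`-fixed
     subalgebra `O_F` modulo `P` lies in `I` (via the polynomial
     `∏_{h ∈ I}(X - σ_h x)`, which has `I`-fixed coefficients and reduces to
     `(X - x̄)^{|I|}` mod `P`);
   * (`exists_rep_comap_eq`) every coset `gI` whose associated prime
     `σ_g⁻¹ P ∩ O_F` equals `Q = P ∩ O_F` has a representative in the
     decomposition group (transitivity of `I` on primes over `Q`, proved with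
     prime avoidance and the `I`-fixed norm `∏_{h∈I} σ_h x`);
   * hence the reductions `k_Q → k_P` of the maps `σ_{r q}` for the distinct
     relevant cosets are *distinct* field embeddings; by Dedekind's linear
     independence of monoid homomorphisms some `β̄ ∈ k_Q` has nonzero "trace",
     and a lift of `β̄` vanishing at all other primes of `O_F` does the job.
-/

open Finset Polynomial

set_option maxHeartbeats 1600000

section Helpers

variable {A B G : Type*} [CommRing A] [CommRing B] [Algebra A B] [Group G]

/-- The subalgebra of elements fixed by (the Galois action of) a subgroup `I`. -/
def fixedSub (σ : G →* B ≃ₐ[A] B) (I : Subgroup G) : Subalgebra A B where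
  carrier := {b | ∀ h ∈ I, σ h b = b}
  mul_mem' := fun {x y} hx hy h hh => by
    rw [map_mul, hx h hh, hy h hh]
  one_mem' := fun h _ => map_one (σ h)
  add_mem' := fun {x y} hx hy h hh => by
    rw [map_add, hx h hh, hy h hh]
  zero_mem' := fun h _ => map_zero (σ h)
  algebraMap_mem' := fun a h _ => (σ h).commutes a

lemma mem_fixedSub {σ : G →* B ≃ₐ[A] B} {I : Subgroup G} {b : B} :
    b ∈ fixedSub σ I ↔ ∀ h ∈ I, σ h b = b := Iff.rfl

/-- Members of the inertia group stabilize `P`. -/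
lemma comap_eq_of_mem_inertia (σ : G →* B ≃ₐ[A] B) (P : Ideal B)
    (I : Subgroup G) (hI : ∀ g, g ∈ I ↔ ∀ x : B, σ g x - x ∈ P)
    {h : G} (hh : h ∈ I) : P.comap (σ h) = P := by
  ext x
  rw [Ideal.mem_comap]
  have hx : σ h x - x ∈ P := (hI h).mp hh x
  constructor
  · intro hσ
    have := P.sub_mem hσ hx
    simpa using this
  · intro hxP
    have := P.add_mem hx hxP
    simpa using this

/-- Claim A: an element of `G` which fixes the `I`-fixed subalgebra modulo `P`
lies in the inertia group `I`. -/
lemma mem_subgroup_of_fixes_fixedSub (σ : G →* B ≃ₐ[A] B) (P : Ideal B)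
    [P.IsPrime] (I : Subgroup G) [Fintype I]
    (hI : ∀ g, g ∈ I ↔ ∀ x : B, σ g x - x ∈ P)
    (u : G) (hu : ∀ b : B, (∀ h ∈ I, σ h b = b) → σ u b - b ∈ P) : u ∈ I := by
  rw [hI]
  intro x
  -- the polynomial with `I`-fixed coefficients
  set g : B[X] := ∏ h : I, (X - C (σ h x)) with hg
  have hmapg : ∀ h' : I, g.map ((σ (h' : G)).toAlgHom.toRingHom) = g := by
    intro h'
    rw [hg, Polynomial.map_prod]
    have : ∀ h : I, ((X : B[X]) - C (σ (h : G) x)).map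
        ((σ (h' : G)).toAlgHom.toRingHom) = X - C (σ ((h' * h : I) : G) x) := by
      intro h
      rw [Polynomial.map_sub, Polynomial.map_X, Polynomial.map_C]
      refine congrArg (fun z => (X : B[X]) - C z) ?_
      show σ (h' : G) (σ (h : G) x) = _
      rw [Subgroup.coe_mul, map_mul]
      rfl
    rw [Finset.prod_congr rfl (fun h _ => this h)]
    exact Equiv.prod_comp (Equiv.mulLeft h') (fun h : I => (X : B[X]) - C (σ (h : G) x))
  have hcoef : ∀ n, ∀ h' ∈ I, σ h' (g.coeff n) = g.coeff n := by
    intro n h' hh'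
    conv_rhs => rw [← hmapg ⟨h', hh'⟩]
    rw [Polynomial.coeff_map]
    rfl
  have hgx : g.eval x = 0 := by
    rw [hg, Polynomial.eval_prod]
    refine Finset.prod_eq_zero (Finset.mem_univ (1 : I)) ?_
    simp
  -- reduce modulo P
  set m := Ideal.Quotient.mk P with hm
  have h1 : (g.map ((σ u).toAlgHom.toRingHom)).map m = g.map m := by
    ext n
    rw [Polynomial.coeff_map, Polynomial.coeff_map, Polynomial.coeff_map]
    exact Ideal.Quotient.eq.mpr (hu (g.coeff n) (fun h hh => hcoef n h hh))
  have h2 : (g.map ((σ u).toAlgHom.toRingHom)).eval (σ u x) = 0 := by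
    rw [Polynomial.eval_map]
    have h2' := Polynomial.eval₂_at_apply (p := g) ((σ u).toAlgHom.toRingHom) x
    rw [hgx, map_zero] at h2'
    exact h2'
  have h3 : (g.map m).eval (m (σ u x)) = 0 := by
    rw [← h1, Polynomial.eval_map, Polynomial.eval₂_at_apply, h2, map_zero]
  have h4 : g.map m = (X - C (m x)) ^ Fintype.card I := by
    rw [hg, Polynomial.map_prod]
    have : ∀ h : I, ((X : B[X]) - C (σ (h : G) x)).map m = X - C (m x) := by
      intro h
      rw [Polynomial.map_sub, Polynomial.map_X, Polynomial.map_C]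
      exact congrArg (fun z => (X : (B ⧸ P)[X]) - C z)
        (Ideal.Quotient.eq.mpr ((hI (h : G)).mp h.2 x))
    rw [Finset.prod_congr rfl (fun h _ => this h), Finset.prod_const, Finset.card_univ]
  have h5 : (m (σ u x) - m x) ^ Fintype.card I = 0 := by
    have := h3
    rw [h4] at this
    simpa using this
  have h6 : m (σ u x) - m x = 0 :=
    pow_eq_zero_iff Fintype.card_ne_zero |>.mp h5
  have : m (σ u x) = m x := by rwa [sub_eq_zero] at h6
  exact Ideal.Quotient.eq.mp this

/-- Transitivity: a coset whose prime meets the fixed subalgebra in `Q` has a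
representative in the decomposition group. -/
lemma exists_rep_comap_eq (σ : G →* B ≃ₐ[A] B) (P : Ideal B) [P.IsMaximal]
    (I : Subgroup G) [Fintype I] (g₀ : G)
    (hq : (P.comap (σ g₀)).comap (algebraMap (fixedSub σ I) B)
        = P.comap (algebraMap (fixedSub σ I) B)) :
    ∃ h ∈ I, P.comap (σ (g₀ * h)) = P := by
  classical
  by_contra h0
  push_neg at h0
  set P' : Ideal B := P.comap (σ g₀) with hP'
  haveI : P'.IsMaximal := Ideal.comap_isMaximal_of_surjective _ (σ g₀).surjective
  have hf : ∀ h : I, P.comap (σ (g₀ * (h : G))) = P'.comap (σ (h : G)) := by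
    intro h
    ext x
    rw [Ideal.mem_comap, Ideal.mem_comap, Ideal.mem_comap, map_mul, AlgEquiv.mul_apply]
  have hfmax : ∀ h : I, (P'.comap (σ (h : G))).IsMaximal := fun h =>
    Ideal.comap_isMaximal_of_surjective _ (σ (h : G)).surjective
  have hfne : ∀ h : I, P'.comap (σ (h : G)) ≠ P := by
    intro h he
    exact h0 (h : G) h.2 ((hf h).trans he)
  -- prime avoidance
  have hsub : ¬ ((P : Set B) ⊆ ⋃ h ∈ (Finset.univ : Finset I), (P'.comap (σ (h : G)) : Set B)) := by
    intro hsub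
    rcases (Ideal.subset_union_prime (1 : I) (1 : I)
      (fun h _ _ _ => (hfmax h).isPrime)).mp hsub with ⟨h, _, hle⟩
    exact hfne h ((‹P.IsMaximal›.eq_of_le (hfmax h).ne_top hle).symm)
  rcases Set.not_subset.mp hsub with ⟨x, hxP, hxU⟩
  have hxf : ∀ h : I, x ∉ P'.comap (σ (h : G)) := by
    intro h hx
    exact hxU (Set.mem_biUnion (Finset.mem_univ h) hx)
  -- the I-fixed "norm"
  set N : B := ∏ h : I, σ (h : G) x with hN
  have hNfix : ∀ h' ∈ I, σ h' N = N := by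
    intro h' hh'
    rw [hN, map_prod]
    have : ∀ h : I, σ h' (σ (h : G) x) = σ (((⟨h', hh'⟩ : I) * h : I) : G) x := by
      intro h
      rw [Subgroup.coe_mul, map_mul]
      rfl
    rw [Finset.prod_congr rfl (fun h _ => this h)]
    exact Equiv.prod_comp (Equiv.mulLeft (⟨h', hh'⟩ : I)) (fun h : I => σ (h : G) x)
  have hNP : N ∈ P := by
    rw [hN, ← Finset.mul_prod_erase Finset.univ _ (Finset.mem_univ (1 : I))]
    have h1 : σ ((1 : I) : G) x = x := by simp
    rw [h1]
    exact Ideal.mul_mem_right _ P hxP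
  have hNQ : (⟨N, hNfix⟩ : fixedSub σ I) ∈ P.comap (algebraMap (fixedSub σ I) B) := by
    rw [Ideal.mem_comap]
    exact hNP
  rw [← hq, Ideal.mem_comap] at hNQ
  have hNP' : N ∈ P' := hNQ
  rw [hN] at hNP'
  haveI : P'.IsPrime := ‹P'.IsMaximal›.isPrime
  rcases Ideal.IsPrime.prod_mem_iff.mp hNP' with ⟨h, _, hmem⟩
  exact hxf h hmem

/-- The key existence statement: there is an `I`-fixed element of `B` whose
"trace over coset representatives" is not in `P`. -/
lemma exists_fixed_trace_not_mem (σ : G →* B ≃ₐ[A] B) (P : Ideal B) [P.IsMaximal]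
    (I : Subgroup G) [Fintype I] [Fintype (G ⧸ I)]
    [Algebra.IsIntegral A B]
    (hI : ∀ g, g ∈ I ↔ ∀ x : B, σ g x - x ∈ P) :
    ∃ b : B, (∀ h ∈ I, σ h b = b) ∧ (∑ q : G ⧸ I, σ (q.out) b) ∉ P := by
  classical
  set O : Subalgebra A B := fixedSub σ I with hO
  haveI : Algebra.IsIntegral (O : Subalgebra A B) B :=
    ⟨fun b => (Algebra.IsIntegral.isIntegral (R := A) b).tower_top⟩
  set Q : Ideal O := P.comap (algebraMap O B) with hQ
  haveI hPmax : P.IsMaximal := inferInstance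
  haveI hQmax : Q.IsMaximal := Ideal.isMaximal_comap_of_isIntegral_of_isMaximal P
  letI : Field (O ⧸ Q) := Ideal.Quotient.field Q
  -- the condition defining "cosets over Q"
  set C : G ⧸ I → Prop := fun q => (P.comap (σ q.out)).comap (algebraMap O B) = Q with hC
  set Φ : (G ⧸ I) → (O →+* B ⧸ P) := fun q =>
    (Ideal.Quotient.mk P).comp (((σ q.out).toAlgHom.toRingHom).comp (algebraMap O B)) with hΦ
  have hΦapply : ∀ q (β : O), Φ q β = Ideal.Quotient.mk P (σ q.out (β : B)) := fun q β => rfl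
  have hσcoset : ∀ g g' : G, (g : G ⧸ I) = (g' : G ⧸ I) → ∀ β : O,
      σ g (β : B) = σ g' (β : B) := by
    intro g g' hgg' β
    have hmem : g⁻¹ * g' ∈ I := QuotientGroup.eq.mp hgg'
    have : σ g' (β : B) = σ g (σ (g⁻¹ * g') (β : B)) := by
      rw [← AlgEquiv.mul_apply, ← map_mul]
      congr 1
      group
    rw [this, β.2 _ hmem]
  -- representatives in the decomposition group
  have hDrep : ∀ q : G ⧸ I, C q → ∃ g : G, (g : G ⧸ I) = q ∧ P.comap (σ g) = P := by
    intro q hq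
    rcases exists_rep_comap_eq σ P I q.out hq with ⟨h, hh, hcom⟩
    exact ⟨q.out * h, by rw [QuotientGroup.mk_mul_of_mem _ hh, QuotientGroup.out_eq'], hcom⟩
  -- each Φ q for q ∈ C kills Q
  have hker : ∀ q : G ⧸ I, C q → ∀ β : O, β ∈ Q → Φ q β = 0 := by
    intro q hq β hβ
    rcases hDrep q hq with ⟨g, hgq, hgP⟩
    rw [hΦapply, hσcoset q.out g (by rw [QuotientGroup.out_eq', hgq]) β,
      Ideal.Quotient.eq_zero_iff_mem]
    have : (β : B) ∈ P.comap (σ g) := by rw [hgP]; exact hβ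
    exact this
  set ψ : {q : G ⧸ I // C q} → ((O ⧸ Q) →+* (B ⧸ P)) := fun q =>
    Ideal.Quotient.lift Q (Φ q.1) (hker q.1 q.2) with hψ
  have hψapply : ∀ (q : {q : G ⧸ I // C q}) (β : O),
      ψ q (Ideal.Quotient.mk Q β) = Φ q.1 β := fun q β => rfl
  -- injectivity of the induced embeddings
  have hψinj : Function.Injective (fun q : {q : G ⧸ I // C q} => (ψ q).toMonoidHom) := by
    intro q q' hqq'
    have heq : ∀ β : O, Φ q.1 β = Φ q'.1 β := by
      intro β
      have := congrArg (fun f => f.toFun (Ideal.Quotient.mk Q β)) hqq'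
      simpa [hψapply] using this
    rcases hDrep q.1 q.2 with ⟨g, hgq, hgP⟩
    rcases hDrep q'.1 q'.2 with ⟨g', hgq', hgP'⟩
    have heq' : ∀ β : O, Ideal.Quotient.mk P (σ g (β : B)) = Ideal.Quotient.mk P (σ g' (β : B)) := by
      intro β
      rw [← hσcoset q.1.out g (by rw [QuotientGroup.out_eq', hgq]) β,
        ← hσcoset q'.1.out g' (by rw [QuotientGroup.out_eq', hgq']) β]
      exact heq β
    have hP'inv : ∀ y ∈ P, σ g'⁻¹ y ∈ P := by
      intro y hy
      have hy2 : σ g' (σ g'⁻¹ y) = y := by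
        rw [← AlgEquiv.mul_apply, ← map_mul]
        simp
      have hiff : σ g'⁻¹ y ∈ P ↔ y ∈ P := by
        conv_lhs => rw [← hgP']
        rw [Ideal.mem_comap, hy2]
      exact hiff.mpr hy
    have hu : ∀ β : B, (∀ h ∈ I, σ h β = β) → σ (g'⁻¹ * g) β - β ∈ P := by
      intro β hβ
      have hmem : σ g β - σ g' β ∈ P := Ideal.Quotient.eq.mp (heq' ⟨β, hβ⟩)
      have := hP'inv _ hmem
      rw [map_sub] at this
      have h1 : σ g'⁻¹ (σ g β) = σ (g'⁻¹ * g) β := by rw [map_mul, AlgEquiv.mul_apply]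
      have h2 : σ g'⁻¹ (σ g' β) = β := by
        rw [← AlgEquiv.mul_apply, ← map_mul]
        simp
      rwa [h1, h2] at this
    have humem : g'⁻¹ * g ∈ I := mem_subgroup_of_fixes_fixedSub σ P I hI _ hu
    have : (g' : G ⧸ I) = (g : G ⧸ I) := QuotientGroup.eq.mpr humem
    exact Subtype.ext (hgq ▸ hgq' ▸ this.symm)
  -- the trivial coset satisfies C
  have hC1 : C ((1 : G) : G ⧸ I) := by
    have hout : ((1 : G) : G ⧸ I).out ∈ I := by
      have h := QuotientGroup.eq.mp (QuotientGroup.out_eq' ((1 : G) : G ⧸ I))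
      simpa using h
    show (P.comap (σ (((1 : G) : G ⧸ I).out))).comap (algebraMap O B) = Q
    rw [comap_eq_of_mem_inertia σ P I hI hout]
  -- Dedekind linear independence
  haveI : Nontrivial (B ⧸ P) := Ideal.Quotient.nontrivial_iff.mpr hPmax.ne_top
  have hLI : LinearIndependent (B ⧸ P)
      (fun q : {q : G ⧸ I // C q} => ((ψ q).toMonoidHom : (O ⧸ Q) → (B ⧸ P))) := by
    have h0 := linearIndependent_monoidHom (O ⧸ Q) (B ⧸ P)
    exact h0.comp _ hψinj
  have hexβ : ∃ β' : O ⧸ Q, (∑ q : {q : G ⧸ I // C q}, ψ q β') ≠ 0 := by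
    by_contra hall
    push_neg at hall
    have hzero : (∑ q : {q : G ⧸ I // C q},
        (1 : B ⧸ P) • ((ψ q).toMonoidHom : (O ⧸ Q) → (B ⧸ P))) = 0 := by
      funext β'
      simpa [Finset.sum_apply] using hall β'
    have := Fintype.linearIndependent_iff.mp hLI (fun _ => (1 : B ⧸ P)) hzero
      ⟨((1 : G) : G ⧸ I), hC1⟩
    exact one_ne_zero this
  rcases hexβ with ⟨β', hβ'⟩
  -- pick τ in all the other primes of O but not in Q
  set Sc : Finset (G ⧸ I) := Finset.univ.filter (fun q => ¬ C q) with hSc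
  set J : Ideal O := ∏ q ∈ Sc, (P.comap (σ q.out)).comap (algebraMap O B) with hJ
  have hfacmax : ∀ q : G ⧸ I, ((P.comap (σ q.out)).comap (algebraMap O B)).IsMaximal := by
    intro q
    haveI : (P.comap (σ q.out)).IsMaximal :=
      Ideal.comap_isMaximal_of_surjective _ (σ q.out).surjective
    exact Ideal.isMaximal_comap_of_isIntegral_of_isMaximal _
  have hJQ : ¬ J ≤ Q := by
    intro hle
    rcases (Ideal.IsPrime.prod_le hQmax.isPrime).mp (hJ ▸ hle) with ⟨q, hqSc, hqle⟩
    have : (P.comap (σ q.out)).comap (algebraMap O B) = Q :=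
      (hfacmax q).eq_of_le hQmax.ne_top hqle
    rw [hSc, Finset.mem_filter] at hqSc
    exact hqSc.2 this
  rcases SetLike.not_le_iff_exists.mp hJQ with ⟨τ, hτJ, hτQ⟩
  have hτne : Ideal.Quotient.mk Q τ ≠ 0 := by
    rwa [Ne, Ideal.Quotient.eq_zero_iff_mem]
  -- the element β
  obtain ⟨β₀, hβ₀⟩ := Ideal.Quotient.mk_surjective ((Ideal.Quotient.mk Q τ)⁻¹ * β')
  set β : O := τ * β₀ with hβdef
  have hβQ : Ideal.Quotient.mk Q β = β' := by
    rw [hβdef, map_mul, hβ₀, ← mul_assoc, mul_inv_cancel₀ hτne, one_mul]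
  refine ⟨(β : B), fun h hh => β.2 h hh, ?_⟩
  -- compute the trace modulo P
  intro hTP
  have hmk : Ideal.Quotient.mk P (∑ q : G ⧸ I, σ q.out (β : B)) = 0 :=
    Ideal.Quotient.eq_zero_iff_mem.mpr hTP
  rw [map_sum] at hmk
  have hsplit : (∑ q : G ⧸ I, Ideal.Quotient.mk P (σ q.out (β : B)))
      = ∑ q ∈ Finset.univ.filter C, Ideal.Quotient.mk P (σ q.out (β : B))
      + ∑ q ∈ Sc, Ideal.Quotient.mk P (σ q.out (β : B)) := by
    rw [hSc]
    exact (Finset.sum_filter_add_sum_filter_not Finset.univ C _).symm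
  have hzeroSc : ∀ q ∈ Sc, Ideal.Quotient.mk P (σ q.out (β : B)) = 0 := by
    intro q hq
    rw [Ideal.Quotient.eq_zero_iff_mem]
    have hτfac : τ ∈ (P.comap (σ q.out)).comap (algebraMap O B) := by
      have : J ≤ (P.comap (σ q.out)).comap (algebraMap O B) :=
        hJ ▸ (Ideal.prod_le_inf.trans (Finset.inf_le hq))
      exact this hτJ
    have hβfac : β ∈ (P.comap (σ q.out)).comap (algebraMap O B) :=
      Ideal.mul_mem_right β₀ _ hτfac
    rw [Ideal.mem_comap, Ideal.mem_comap] at hβfac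
    exact hβfac
  have hCsum : ∑ q ∈ Finset.univ.filter C, Ideal.Quotient.mk P (σ q.out (β : B))
      = ∑ q : {q : G ⧸ I // C q}, ψ q β' := by
    rw [← hβQ]
    have hmemiff : ∀ q : G ⧸ I, q ∈ Finset.univ.filter C ↔ C q := fun q => by simp
    rw [Finset.sum_subtype (Finset.univ.filter C) hmemiff
      (fun q => Ideal.Quotient.mk P (σ q.out (β : B)))]
    rfl
  rw [hsplit, Finset.sum_eq_zero hzeroSc, add_zero, hCsum] at hmk
  exact hβ' hmk

end Helpers

section Helpers2

variable (A K L B : Type*) [CommRing A] [CommRing B] [Field K] [Field L]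
    [IsDomain A] [IsDiscreteValuationRing A]
    [Algebra A K] [IsFractionRing A K]
    [Algebra K L] [FiniteDimensional K L] [IsGalois K L]
    [Algebra A B] [Algebra B L] [Algebra A L]
    [IsScalarTower A B L] [IsScalarTower A K L]
    [IsIntegralClosure B A L] [IsDomain B]

/-- A `Gal`-fixed element of `B` comes from `A`. -/
lemma exists_algebraMap_eq_of_fixed (b : B)
    (hb : ∀ g : L ≃ₐ[K] L, galRestrict A K L B g b = b) :
    ∃ a : A, algebraMap A B a = b := by
  have hbl : ∀ g : L ≃ₐ[K] L, g (algebraMap B L b) = algebraMap B L b := by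
    intro g
    rw [← algebraMap_galRestrict_apply A g b, hb g]
  have hmem : algebraMap B L b ∈ IntermediateField.fixedField (⊤ : Subgroup (L ≃ₐ[K] L)) := by
    intro g
    exact hbl g.1
  have hbot : IntermediateField.fixedField (⊤ : Subgroup (L ≃ₐ[K] L)) = ⊥ := by
    have h01 := (IsGalois.tfae (F := K) (E := L)).out 0 1
    exact h01.mp (inferInstance : IsGalois K L)
  rw [hbot, IntermediateField.mem_bot] at hmem
  rcases hmem with ⟨k, hk⟩
  have hint : IsIntegral A (algebraMap B L b) :=
    IsIntegralClosure.isIntegral_iff.mpr ⟨b, rfl⟩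
  rw [← hk] at hint
  have hkint : IsIntegral A k := by
    rwa [isIntegral_algebraMap_iff (algebraMap K L).injective] at hint
  rcases IsIntegrallyClosed.isIntegral_iff.mp hkint with ⟨a, ha⟩
  refine ⟨a, ?_⟩
  have hinj : Function.Injective (algebraMap B L) := IsIntegralClosure.algebraMap_injective B A L
  apply hinj
  rw [← IsScalarTower.algebraMap_apply A B L, IsScalarTower.algebraMap_apply A K L, ha, hk]

end Helpers2

/-- Suppose `char K = 0`.  Let `M` be a semi-linear `O_L[G]`-module, flat over
`O_L = B`, and let `I ⊆ G` be the inertia group of `G` at a maximal ideal `P` of `B`.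
Then `π^{v_K(|I|)} • H¹(G, M) = 0`: every `1`-cocycle `c : G → M` becomes a coboundary
after multiplication by `π^e`, where `e = v_K(|I|)` is the valuation of `|I|` in `A`. -/
theorem exponent_H1_le_valuation_inertia
    (A K L B : Type*) [CommRing A] [CommRing B] [Field K] [Field L]
    [IsDomain A] [IsDiscreteValuationRing A] [CharZero K]
    [Algebra A K] [IsFractionRing A K]
    [Algebra K L] [FiniteDimensional K L] [IsGalois K L]
    [Algebra A B] [Algebra B L] [Algebra A L]
    [IsScalarTower A B L] [IsScalarTower A K L]
    [IsIntegralClosure B A L] [IsDomain B]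
    (M : Type*) [AddCommGroup M] [Module B M] [Module A M] [IsScalarTower A B M]
    [Module.Flat B M]
    (ρ : (L ≃ₐ[K] L) → M → M)
    (hone : ∀ x, ρ 1 x = x)
    (hmul : ∀ g h x, ρ (g * h) x = ρ g (ρ h x))
    (hadd : ∀ g x y, ρ g (x + y) = ρ g x + ρ g y)
    (hsmul : ∀ g (b : B) x, ρ g (b • x) = galRestrict A K L B g b • ρ g x)
    (π : A) (hπ : Irreducible π)
    (P : Ideal B) (hP : P.IsMaximal)
    (I : Subgroup (L ≃ₐ[K] L))
    (hI : ∀ g, g ∈ I ↔ ∀ x : B, galRestrict A K L B g x - x ∈ P)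
    (e : ℕ) (he : Associated ((Nat.card I : A)) (π ^ e)) :
    ∀ c : (L ≃ₐ[K] L) → M, (∀ g h, c (g * h) = c g + ρ g (c h)) →
      ∃ x : M, ∀ g, π ^ e • c g = ρ g x - x := by
  classical
  intro c hc
  haveI := hP
  letI : Fintype (L ≃ₐ[K] L) := AlgEquiv.fintype K L
  letI : Fintype I := Fintype.ofFinite _
  letI : Fintype ((L ≃ₐ[K] L) ⧸ I) := Fintype.ofFinite _
  set σ : (L ≃ₐ[K] L) →* (B ≃ₐ[A] B) := (galRestrict A K L B).toMonoidHom with hσdef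
  have hσapp : ∀ g x, σ g x = galRestrict A K L B g x := fun g x => rfl
  -- ρ as additive maps
  set φ : (L ≃ₐ[K] L) → (M →+ M) := fun g => AddMonoidHom.mk' (ρ g) (hadd g) with hφdef
  have hφapp : ∀ g x, φ g x = ρ g x := fun g x => rfl
  have hφA : ∀ g (a : A) m, ρ g (a • m) = a • ρ g m := by
    intro g a m
    rw [← algebraMap_smul B a m, hsmul, (galRestrict A K L B g).commutes a, algebraMap_smul]
  -- integrality
  haveI hint : Algebra.IsIntegral A B := by
    constructor
    intro b
    have h1 : IsIntegral A (algebraMap B L b) := IsIntegralClosure.isIntegral_iff.mpr ⟨b, rfl⟩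
    rwa [isIntegral_algebraMap_iff (IsIntegralClosure.algebraMap_injective B A L)] at h1
  -- Step 1: averaging over I
  obtain ⟨w, hw⟩ := he
  set s : M := ∑ h : I, c (h : L ≃ₐ[K] L) with hs
  have hstep1 : ∀ g ∈ I, (Nat.card I) • c g = s - ρ g s := by
    intro g hg
    have h1 : ∑ h : I, c (((⟨g, hg⟩ : I) * h : I) : L ≃ₐ[K] L) = s := by
      rw [hs]
      exact Equiv.sum_comp (Equiv.mulLeft (⟨g, hg⟩ : I)) (fun h : I => c (h : L ≃ₐ[K] L))
    have h2 : ∀ h : I, c (((⟨g, hg⟩ : I) * h : I) : L ≃ₐ[K] L)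
        = c g + ρ g (c (h : L ≃ₐ[K] L)) := by
      intro h
      rw [Subgroup.coe_mul]
      exact hc g (h : L ≃ₐ[K] L)
    have h3 : ∑ h : I, ρ g (c (h : L ≃ₐ[K] L)) = ρ g s := by
      rw [hs]
      exact (map_sum (φ g) (fun h : I => c (h : L ≃ₐ[K] L)) Finset.univ).symm
    have h4 : s = Fintype.card I • c g + ρ g s := by
      conv_lhs => rw [← h1]
      rw [Finset.sum_congr rfl (fun h _ => h2 h), Finset.sum_add_distrib,
        Finset.sum_const, Finset.card_univ, h3]
    have h5 : s - ρ g s = Fintype.card I • c g := sub_eq_iff_eq_add.mpr h4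
    rw [Nat.card_eq_fintype_card]
    exact h5.symm
  set x₁ : M := (w : A) • s with hx₁
  set c' : (L ≃ₐ[K] L) → M := fun g => π ^ e • c g + ρ g x₁ - x₁ with hc'
  have hc'0 : ∀ g ∈ I, c' g = 0 := by
    intro g hg
    show π ^ e • c g + ρ g x₁ - x₁ = 0
    have h1 : π ^ e • c g = (w : A) • ((Nat.card I : A) • c g) := by
      rw [← mul_smul, mul_comm, hw]
    have h2 : ((Nat.card I : A)) • c g = (Nat.card I) • c g := Nat.cast_smul_eq_nsmul A _ _
    have h3 : ρ g x₁ = (w : A) • ρ g s := hφA g _ _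
    have h4 : x₁ = (w : A) • s := rfl
    rw [h1, h2, hstep1 g hg, h3, smul_sub, h4]
    abel
  have hc'coc : ∀ g h, c' (g * h) = c' g + ρ g (c' h) := by
    intro g h
    show π ^ e • c (g * h) + ρ (g * h) x₁ - x₁
      = (π ^ e • c g + ρ g x₁ - x₁) + ρ g (π ^ e • c h + ρ h x₁ - x₁)
    have e1 : ρ g (π ^ e • c h + ρ h x₁ - x₁) = ρ g (π ^ e • c h + ρ h x₁) - ρ g x₁ :=
      map_sub (φ g) _ _
    have e2 : ρ g (π ^ e • c h + ρ h x₁) = ρ g (π ^ e • c h) + ρ g (ρ h x₁) := hadd g _ _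
    have e3 : ρ g (π ^ e • c h) = π ^ e • ρ g (c h) := hφA g _ _
    have e4 : ρ g (ρ h x₁) = ρ (g * h) x₁ := (hmul g h x₁).symm
    rw [e1, e2, e3, e4, hc g h, smul_add]
    abel
  have hc'coset : ∀ g g' : L ≃ₐ[K] L,
      (g : (L ≃ₐ[K] L) ⧸ I) = (g' : (L ≃ₐ[K] L) ⧸ I) → c' g = c' g' := by
    intro g g' hgg'
    have hmem : g⁻¹ * g' ∈ I := QuotientGroup.eq.mp hgg'
    have : g' = g * (g⁻¹ * g') := by group
    rw [this, hc'coc, hc'0 _ hmem]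
    have : ρ g (0 : M) = 0 := map_zero (φ g)
    rw [this, add_zero]
  -- Step 2: the good element b
  obtain ⟨b, hbfix, hbT⟩ := exists_fixed_trace_not_mem σ P I hI
  set T : B := ∑ q : (L ≃ₐ[K] L) ⧸ I, σ q.out b with hT
  have hσcoset : ∀ g g' : L ≃ₐ[K] L,
      (g : (L ≃ₐ[K] L) ⧸ I) = (g' : (L ≃ₐ[K] L) ⧸ I) → σ g b = σ g' b := by
    intro g g' hgg'
    have hmem : g⁻¹ * g' ∈ I := QuotientGroup.eq.mp hgg'
    have h1 : σ g' b = σ g (σ (g⁻¹ * g') b) := by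
      rw [← AlgEquiv.mul_apply, ← map_mul]
      congr 1
      group
    rw [h1, hbfix _ hmem]
  have hmulapp : ∀ g g' : L ≃ₐ[K] L, ∀ x : B, σ (g * g') x = σ g (σ g' x) := by
    intro g g' x
    rw [map_mul, AlgEquiv.mul_apply]
  have hcosmul : ∀ (g : L ≃ₐ[K] L) (q : (L ≃ₐ[K] L) ⧸ I),
      ((g * q.out : L ≃ₐ[K] L) : (L ≃ₐ[K] L) ⧸ I) = (((g • q).out : L ≃ₐ[K] L) : (L ≃ₐ[K] L) ⧸ I) := by
    intro g q
    rw [QuotientGroup.out_eq']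
    have : ((g * q.out : L ≃ₐ[K] L) : (L ≃ₐ[K] L) ⧸ I) = g • (q.out : (L ≃ₐ[K] L) ⧸ I) := by
      rw [MulAction.Quotient.smul_mk]
      rfl
    rw [this, QuotientGroup.out_eq']
  have hTfix : ∀ g : L ≃ₐ[K] L, galRestrict A K L B g T = T := by
    intro g
    have h0 : galRestrict A K L B g T = σ g T := rfl
    rw [h0, hT, map_sum]
    have h1 : ∀ q : (L ≃ₐ[K] L) ⧸ I, σ g (σ q.out b) = σ ((g • q).out) b := by
      intro q
      rw [← hmulapp]
      exact hσcoset _ _ (hcosmul g q)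
    rw [Finset.sum_congr rfl (fun q _ => h1 q)]
    exact Equiv.sum_comp (MulAction.toPerm g) (fun q : (L ≃ₐ[K] L) ⧸ I => σ q.out b)
  obtain ⟨t, ht⟩ := exists_algebraMap_eq_of_fixed A K L B T hTfix
  have htunit : IsUnit t := by
    by_contra hnu
    have h1 : t ∈ IsLocalRing.maximalIdeal A := hnu
    have h2 : (P.comap (algebraMap A B)).IsMaximal :=
      Ideal.isMaximal_comap_of_isIntegral_of_isMaximal P
    have h3 : P.comap (algebraMap A B) = IsLocalRing.maximalIdeal A := IsLocalRing.eq_maximalIdeal h2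
    have h4 : t ∈ P.comap (algebraMap A B) := by rw [h3]; exact h1
    rw [Ideal.mem_comap, ht] at h4
    exact hbT h4
  set x₂ : M := ∑ q : (L ≃ₐ[K] L) ⧸ I, (σ q.out b) • c' q.out with hx₂
  have hx₂eq : ∀ g, ρ g x₂ = x₂ - T • c' g := by
    intro g
    have h1 : ρ g x₂ = ∑ q : (L ≃ₐ[K] L) ⧸ I, ρ g ((σ q.out b) • c' q.out) := by
      rw [hx₂]
      exact map_sum (φ g) _ Finset.univ
    have h2 : ∀ q : (L ≃ₐ[K] L) ⧸ I, ρ g ((σ q.out b) • c' q.out)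
        = (σ ((g • q).out) b) • c' ((g • q).out) - (σ ((g • q).out) b) • c' g := by
      intro q
      rw [hsmul]
      have hgb : galRestrict A K L B g (σ q.out b) = σ (g * q.out) b := by
        rw [hmulapp]
        rfl
      have hρ : ρ g (c' q.out) = c' (g * q.out) - c' g := by
        rw [hc'coc g q.out]
        abel
      rw [hgb, hρ, smul_sub]
      rw [hσcoset _ _ (hcosmul g q), hc'coset _ _ (hcosmul g q)]
    rw [h1, Finset.sum_congr rfl (fun q _ => h2 q), Finset.sum_sub_distrib]
    have h3 : ∑ q : (L ≃ₐ[K] L) ⧸ I, (σ ((g • q).out) b) • c' ((g • q).out) = x₂ := by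
      rw [hx₂]
      exact Equiv.sum_comp (MulAction.toPerm g)
        (fun q : (L ≃ₐ[K] L) ⧸ I => (σ q.out b) • c' q.out)
    have h4 : ∑ q : (L ≃ₐ[K] L) ⧸ I, (σ ((g • q).out) b) • c' g = T • c' g := by
      rw [← Finset.sum_smul, hT]
      congr 1
      exact Equiv.sum_comp (MulAction.toPerm g) (fun q : (L ≃ₐ[K] L) ⧸ I => σ q.out b)
    rw [h3, h4]
  -- conclude
  set u := htunit.unit with hu
  set y : M := ((u⁻¹ : Aˣ) : A) • x₂ with hy
  have hc'cob : ∀ g, c' g = y - ρ g y := by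
    intro g
    have h1 : T • c' g = t • c' g := by
      rw [← ht, algebraMap_smul]
    have h2 : t • c' g = x₂ - ρ g x₂ := by
      rw [← h1, hx₂eq g]
      abel
    have h3 : ((u⁻¹ : Aˣ) : A) • (t • c' g) = c' g := by
      rw [← mul_smul]
      have : ((u⁻¹ : Aˣ) : A) * t = 1 := by
        rw [← htunit.unit_spec]
        exact Units.inv_mul u
      rw [this, one_smul]
    rw [← h3, h2, smul_sub, ← hφA g, hy]
  refine ⟨-(y + x₁), fun g => ?_⟩
  have h1 : π ^ e • c g = c' g - ρ g x₁ + x₁ := by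
    show π ^ e • c g = (π ^ e • c g + ρ g x₁ - x₁) - ρ g x₁ + x₁
    abel
  have h2 : ρ g (-(y + x₁)) = -(ρ g y + ρ g x₁) := by
    have ha : ρ g (-(y + x₁)) = -ρ g (y + x₁) := map_neg (φ g) (y + x₁)
    rw [ha, hadd]
  rw [h1, hc'cob g, h2]
  abel
end

section
/- Let M be a semi-linear O_L[G]-module that is flat over O_L. Then π^{2⌊v_K(𝔇_{L/K})⌋}·H^1(G,M) = 0, i.e. the exponent of the O_K-module H^1(G,M) is at most 2⌊v_K(𝔇_{L/K})⌋. -/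
open scoped nonZeroDivisors

theorem aux_trace
    (A K L B : Type*) [CommRing A] [CommRing B] [Field K] [Field L]
    [IsDomain A] [IsDiscreteValuationRing A] [IsIntegrallyClosed A]
    [Algebra A K] [IsFractionRing A K]
    [Algebra K L] [FiniteDimensional K L] [IsGalois K L]
    [Algebra A B] [Algebra B L] [Algebra A L]
    [IsScalarTower A B L] [IsScalarTower A K L]
    [IsIntegralClosure B A L] [IsDomain B]
    [IsDedekindDomain B] [NoZeroSMulDivisors A B]
    [IsFractionRing B L] [Module.Finite A B]
    (π : A) (hπ : Irreducible π)
    (P : Ideal B) (hP : P.IsMaximal)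
    (d : ℕ) (hd : ¬ differentIdeal A B ≤ P ^ (d + 1))
    (e : ℕ) (he : e = Ideal.ramificationIdx' (IsLocalRing.maximalIdeal A) P)
    (m : ℕ) (hm : m = 2 * (d / e)) :
    ∃ b : B, Algebra.intTrace A B b = π ^ m := by
  have hinj : Function.Injective (algebraMap A B) :=
    FaithfulSMul.algebraMap_injective A B
  haveI : Algebra.IsIntegral A B := IsIntegralClosure.isIntegral_algebra A L
  have hcom : P.comap (algebraMap A B) = IsLocalRing.maximalIdeal A :=
    IsLocalRing.eq_maximalIdeal (Ideal.isMaximal_comap_of_isIntegral_of_isMaximal P)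
  have hle : Ideal.map (algebraMap A B) (IsLocalRing.maximalIdeal A) ≤ P :=
    Ideal.map_le_iff_le_comap.mpr hcom.ge
  have hmapne : Ideal.map (algebraMap A B) (IsLocalRing.maximalIdeal A) ≠ ⊥ := by
    intro h
    exact IsDiscreteValuationRing.not_a_field A ((Ideal.map_eq_bot_iff_of_injective hinj).mp h)
  have he0 : e ≠ 0 := by
    rw [he]
    exact Ideal.IsDedekindDomain.ramificationIdx'_ne_zero hmapne hP.isPrime hle
  have hπP : algebraMap A B π ∈ P ^ e := by
    rw [he]
    exact Ideal.le_pow_ramificationIdx' (Ideal.mem_map_of_mem _ hπ.not_isUnit)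
  have key : d + 1 ≤ e * (m + 1) := by
    have h1 : d < e * (d / e) + e := by
      conv_lhs => rw [← Nat.div_add_mod d e]
      exact Nat.add_lt_add_left (Nat.mod_lt _ (Nat.pos_of_ne_zero he0)) _
    have h2 : e * (m + 1) = e * (d / e) + (e * (d / e) + e) := by rw [hm]; ring
    generalize e * (d / e) = X at h1 h2
    omega
  -- Step 1: some element has trace not divisible by π^(m+1)
  have hnotall : ¬ ∀ b : B, π ^ (m + 1) ∣ Algebra.intTrace A B b := by
    intro hall
    apply hd
    have hπK : algebraMap A K (π ^ (m + 1)) ≠ 0 := by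
      rw [map_pow]
      exact pow_ne_zero _ ((map_ne_zero_iff _ (IsFractionRing.injective A K)).mpr hπ.ne_zero)
    set y : L := algebraMap K L (algebraMap A K (π ^ (m + 1))) with hy
    have hy0 : y ≠ 0 := by
      rw [hy]
      exact (map_ne_zero_iff _ (algebraMap K L).injective).mpr hπK
    have hyB : algebraMap B L (algebraMap A B (π ^ (m + 1))) = y := by
      rw [← IsScalarTower.algebraMap_apply A B L, IsScalarTower.algebraMap_apply A K L]
    have hI : (FractionalIdeal.spanSingleton B⁰ y) ≠ 0 := by
      rwa [ne_eq, FractionalIdeal.spanSingleton_eq_zero_iff]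
    have hDle : ↑(differentIdeal A B) ≤ FractionalIdeal.spanSingleton B⁰ y := by
      rw [differentialIdeal_le_fractionalIdeal_iff (K := K) hI]
      rw [Submodule.map_le_iff_le_comap]
      intro z hz
      simp only [Submodule.restrictScalars_mem, Submodule.mem_comap,
        LinearMap.coe_restrictScalars] at hz ⊢
      rw [FractionalIdeal.spanSingleton_inv] at hz
      obtain ⟨bb, hbb⟩ := (FractionalIdeal.mem_spanSingleton B⁰).mp (FractionalIdeal.mem_coe.mp hz)
      obtain ⟨a₀, ha₀⟩ := hall bb
      have hzz : z = (algebraMap A K (π ^ (m + 1)))⁻¹ • (algebraMap B L bb) := by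
        rw [← hbb, Algebra.smul_def, Algebra.smul_def, mul_comm, hy, map_inv₀]
      rw [hzz, LinearMap.map_smul]
      have : Algebra.trace K L (algebraMap B L bb) = algebraMap A K (Algebra.intTrace A B bb) :=
        (Algebra.algebraMap_intTrace (A := A) bb).symm
      rw [this, ha₀, map_mul, smul_eq_mul, ← mul_assoc, inv_mul_cancel₀ hπK, one_mul]
      rw [Submodule.one_eq_range]
      exact ⟨a₀, rfl⟩
    have hDle2 : differentIdeal A B ≤ Ideal.span {algebraMap A B (π ^ (m + 1))} := by
      rw [← FractionalIdeal.coeIdeal_le_coeIdeal L, FractionalIdeal.coeIdeal_span_singleton, hyB]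
      exact hDle
    refine hDle2.trans ?_
    rw [Ideal.span_le, Set.singleton_subset_iff]
    have h1 : algebraMap A B (π ^ (m + 1)) ∈ (P ^ e) ^ (m + 1) := by
      rw [map_pow]
      exact Ideal.pow_mem_pow hπP _
    rw [← pow_mul] at h1
    exact Ideal.pow_le_pow_right key h1
  obtain ⟨b, hb⟩ := not_forall.mp hnotall
  have hb0 : Algebra.intTrace A B b ≠ 0 := fun h => hb (h ▸ dvd_zero _)
  obtain ⟨n, u, hnu⟩ := IsDiscreteValuationRing.eq_unit_mul_pow_irreducible hb0 hπ
  have hn : n ≤ m := by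
    by_contra hc
    push_neg at hc
    exact hb (hnu ▸ Dvd.dvd.mul_left (pow_dvd_pow π hc) _)
  refine ⟨(((u⁻¹ : Aˣ) : A) * π ^ (m - n)) • b, ?_⟩
  rw [map_smul, smul_eq_mul, hnu,
    show ((u⁻¹ : Aˣ) : A) * π ^ (m - n) * (↑u * π ^ n) =
      (((u⁻¹ : Aˣ) : A) * ↑u) * (π ^ (m - n) * π ^ n) by ring,
    u.inv_mul, one_mul, ← pow_add, Nat.sub_add_cancel hn]

/-- Let `M` be a semi-linear `O_L[G]`-module, flat over `O_L = B`.  Then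
`π^{2⌊v_K(𝔇_{L/K})⌋} • H¹(G, M) = 0`: every `1`-cocycle `c : G → M` becomes a
coboundary after multiplication by `π^{2⌊d/e⌋}`, where `d = v_L(𝔇_{L/K})` is the
exponent of the different at a maximal ideal `P` of `B` and `e = e_{L/K}` is the
ramification index of `P` over the maximal ideal of `A` (so `⌊v_K(𝔇_{L/K})⌋ = d / e`
with natural number division). -/
theorem exponent_H1_le_two_mul_val_different
    (A K L B : Type*) [CommRing A] [CommRing B] [Field K] [Field L]
    [IsDomain A] [IsDiscreteValuationRing A] [IsIntegrallyClosed A]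
    [Algebra A K] [IsFractionRing A K]
    [Algebra K L] [FiniteDimensional K L] [IsGalois K L]
    [Algebra A B] [Algebra B L] [Algebra A L]
    [IsScalarTower A B L] [IsScalarTower A K L]
    [IsIntegralClosure B A L] [IsDomain B]
    [IsDedekindDomain B] [NoZeroSMulDivisors A B]
    (M : Type*) [AddCommGroup M] [Module B M] [Module A M] [IsScalarTower A B M]
    [Module.Flat B M]
    (ρ : (L ≃ₐ[K] L) → M → M)
    (hone : ∀ x, ρ 1 x = x)
    (hmul : ∀ g h x, ρ (g * h) x = ρ g (ρ h x))
    (hadd : ∀ g x y, ρ g (x + y) = ρ g x + ρ g y)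
    (hsmul : ∀ g (b : B) x, ρ g (b • x) = galRestrict A K L B g b • ρ g x)
    (π : A) (hπ : Irreducible π)
    (P : Ideal B) (hP : P.IsMaximal)
    (d : ℕ) (hd : differentIdeal A B ≤ P ^ d ∧ ¬ differentIdeal A B ≤ P ^ (d + 1))
    (e : ℕ) (he : e = Ideal.ramificationIdx' (IsLocalRing.maximalIdeal A) P) :
    ∀ c : (L ≃ₐ[K] L) → M, (∀ g h, c (g * h) = c g + ρ g (c h)) →
      ∃ x : M, ∀ g, π ^ (2 * (d / e)) • c g = ρ g x - x := by
  intro c hcoc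
  haveI : IsFractionRing B L :=
    IsIntegralClosure.isFractionRing_of_finite_extension A K L B
  haveI : Module.Finite A B := IsIntegralClosure.finite A K L B
  obtain ⟨b, hb⟩ := aux_trace A K L B π hπ P hP d hd.2 e he (2 * (d / e)) rfl
  -- the sum of all conjugates of b is (the image of) π ^ (2 * (d / e))
  have ht : (∑ g : L ≃ₐ[K] L, galRestrict A K L B g b)
      = algebraMap A B (π ^ (2 * (d / e))) := by
    apply IsFractionRing.injective B L
    rw [map_sum]
    have h1 : ∀ g : L ≃ₐ[K] L, algebraMap B L (galRestrict A K L B g b)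
        = g (algebraMap B L b) := fun g => algebraMap_galRestrict_apply A g b
    rw [Finset.sum_congr rfl fun g _ => h1 g, ← trace_eq_sum_automorphisms,
      ← Algebra.algebraMap_intTrace (A := A), hb,
      ← IsScalarTower.algebraMap_apply A K L, IsScalarTower.algebraMap_apply A B L]
  -- the standard averaging element
  set x : M := ∑ h : L ≃ₐ[K] L, galRestrict A K L B h b • c h with hx
  refine ⟨-x, fun g => ?_⟩
  let F : M →+ M := AddMonoidHom.mk' (ρ g) (hadd g)
  have hFx : ∀ z, F z = ρ g z := fun _ => rfl
  have hgx : ρ g x = x - (∑ h : L ≃ₐ[K] L, galRestrict A K L B h b) • c g := by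
    have step1 : ρ g x = ∑ h : L ≃ₐ[K] L,
        galRestrict A K L B (g * h) b • (c (g * h) - c g) := by
      rw [← hFx, hx, map_sum]
      refine Finset.sum_congr rfl fun h _ => ?_
      rw [hFx, hsmul]
      congr 1
      · rw [map_mul]
        rfl
      · have := hcoc g h
        rw [this]
        abel
    rw [step1]
    simp only [smul_sub]
    rw [Finset.sum_sub_distrib, ← Finset.sum_smul]
    congr 1
    · exact Fintype.sum_equiv (Equiv.mulLeft g) _ _ (fun h => rfl)
    · congr 1
      exact Fintype.sum_equiv (Equiv.mulLeft g) _ _ (fun h => rfl)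
  have hneg : ρ g (-x) = -ρ g x := by
    rw [← hFx, ← hFx, map_neg]
  rw [hneg, hgx]
  rw [ht, algebraMap_smul]
  abel
end

section
/- Let M be a semi-linear O_L[G]-module, flat over O_L, and set h = 2⌊v_K(𝔇_{L/K})⌋. Let N ≥ 0 and m ≥ N + h. Then the natural map f_N: M^G/π^{N+1}M^G → (M/π^{N+1}M)^G is injective and its image equals the image of the reduction map f_{m,N}: (M/π^{m+1}M)^G → (M/π^{N+1}M)^G. In particular f_N induces an isomorphism M^G/π^{N+1}M^G ≅ Im(f_{m,N}), so M^G/π^{N+1}M^G is determined by the G-module M/π^{m+1}M. -/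
lemma flat_isSMulRegular {B M : Type*} [CommRing B] [IsDomain B] [AddCommGroup M]
    [Module B M] [Module.Flat B M] {b : B} (hb : b ≠ 0) : IsSMulRegular M b := by
  have h : IsSMulRegular B b := fun x y hxy => mul_left_cancel₀ hb hxy
  have h2 := h.rTensor (R := B) M
  exact ((TensorProduct.lid B M).toEquiv.isSMulRegular_congr
    (fun x => map_smul (TensorProduct.lid B M) b x)).mp h2

open nonZeroDivisors

/-- Let `M` be a semi-linear `O_L[G]`-module, flat over `O_L = B`, and let
`h = 2⌊v_K(𝔇_{L/K})⌋ = 2 * (d / e)`.  Let `N ≥ 0` and `m ≥ N + h`.  Then the natural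
map `f_N : M^G/π^{N+1}M^G → (M/π^{N+1}M)^G` is injective and its image equals the
image of the reduction map `f_{m,N} : (M/π^{m+1}M)^G → (M/π^{N+1}M)^G`; in particular
`M^G/π^{N+1}M^G` is determined by the `G`-module `M/π^{m+1}M`.  Elementwise:
(1) (injectivity) every `G`-invariant `x` divisible by `π^{N+1}` in `M` is `π^{N+1}`
    times a `G`-invariant element;
(2) (Im f_{m,N} ⊆ Im f_N) every `x` which is `G`-invariant modulo `π^{m+1}M` is
    congruent modulo `π^{N+1}M` to a `G`-invariant element;
(3) (Im f_N ⊆ Im f_{m,N}) every `G`-invariant element is `G`-invariant modulo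
    `π^{m+1}M`. -/
theorem invariants_mod_pi_determined
    (A K L B : Type*) [CommRing A] [CommRing B] [Field K] [Field L]
    [IsDomain A] [IsDiscreteValuationRing A] [IsIntegrallyClosed A]
    [Algebra A K] [IsFractionRing A K]
    [Algebra K L] [FiniteDimensional K L] [IsGalois K L]
    [Algebra A B] [Algebra B L] [Algebra A L]
    [IsScalarTower A B L] [IsScalarTower A K L]
    [IsIntegralClosure B A L] [IsDomain B]
    [IsDedekindDomain B] [NoZeroSMulDivisors A B]
    (M : Type*) [AddCommGroup M] [Module B M] [Module A M] [IsScalarTower A B M]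
    [Module.Flat B M]
    (ρ : (L ≃ₐ[K] L) → M → M)
    (hone : ∀ x, ρ 1 x = x)
    (hmul : ∀ g h x, ρ (g * h) x = ρ g (ρ h x))
    (hadd : ∀ g x y, ρ g (x + y) = ρ g x + ρ g y)
    (hsmul : ∀ g (b : B) x, ρ g (b • x) = galRestrict A K L B g b • ρ g x)
    (π : A) (hπ : Irreducible π)
    (P : Ideal B) (hP : P.IsMaximal)
    (d : ℕ) (hd : differentIdeal A B ≤ P ^ d ∧ ¬ differentIdeal A B ≤ P ^ (d + 1))
    (e : ℕ) (he : e = Ideal.ramificationIdx' (IsLocalRing.maximalIdeal A) P)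
    (N m : ℕ) (hm : N + 2 * (d / e) ≤ m) :
    (∀ x : M, (∀ g, ρ g x = x) → (∃ y : M, x = π ^ (N + 1) • y) →
      ∃ z : M, (∀ g, ρ g z = z) ∧ x = π ^ (N + 1) • z) ∧
    (∀ x : M, (∀ g, ∃ y : M, ρ g x - x = π ^ (m + 1) • y) →
      ∃ z : M, (∀ g, ρ g z = z) ∧ ∃ y : M, x - z = π ^ (N + 1) • y) ∧
    (∀ z : M, (∀ g, ρ g z = z) → ∀ g, ∃ y : M, ρ g z - z = π ^ (m + 1) • y) := by
  classical
  have hAsmul : ∀ g (a : A) (x : M), ρ g (a • x) = a • ρ g x := fun g a x => by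
    rw [← algebraMap_smul B a x, hsmul, AlgEquiv.commutes, algebraMap_smul]
  have hreg : ∀ (j : ℕ), Function.Injective (fun (v : M) => π ^ j • v) := fun j => by
    have h0 : (algebraMap A B (π ^ j)) ≠ 0 := fun h =>
      pow_ne_zero j hπ.ne_zero (FaithfulSMul.algebraMap_injective A B (by simpa using h))
    have hr := flat_isSMulRegular (M := M) h0
    intro v w hvw
    apply hr
    show algebraMap A B (π ^ j) • v = algebraMap A B (π ^ j) • w
    rw [algebraMap_smul, algebraMap_smul]
    exact hvw
  refine ⟨?_, ?_, ?_⟩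
  · rintro x hxinv ⟨y, rfl⟩
    refine ⟨y, fun g => ?_, rfl⟩
    apply hreg (N+1)
    show π ^ (N+1) • ρ g y = π ^ (N+1) • y
    rw [← hAsmul g]
    exact hxinv g
  · intro x hx
    choose yy hyy using hx
    haveI : IsFractionRing B L := IsIntegralClosure.isFractionRing_of_finite_extension A K L B
    haveI : Module.Finite A B := IsIntegralClosure.finite A K L B
    set k := 2 * (d / e) with hk
    have hπ0 : algebraMap A B π ≠ 0 := fun h =>
      hπ.ne_zero (FaithfulSMul.algebraMap_injective A B (by simpa using h))
    have hcomap : Ideal.comap (algebraMap A B) P = IsLocalRing.maximalIdeal A :=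
      IsLocalRing.eq_maximalIdeal (Ideal.isMaximal_comap_of_isIntegral_of_isMaximal P)
    have hmapleP : Ideal.map (algebraMap A B) (IsLocalRing.maximalIdeal A) ≤ P :=
      Ideal.map_le_iff_le_comap.mpr hcomap.ge
    have hπmem : π ∈ IsLocalRing.maximalIdeal A := hπ.not_isUnit
    have hmapne : Ideal.map (algebraMap A B) (IsLocalRing.maximalIdeal A) ≠ ⊥ := by
      intro h
      have h2 := Ideal.mem_map_of_mem (algebraMap A B) hπmem
      rw [h] at h2
      exact hπ0 (by simpa using h2)
    have he0 : e ≠ 0 := by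
      rw [he]
      exact Ideal.IsDedekindDomain.ramificationIdx'_ne_zero hmapne hP.isPrime hmapleP
    have hπP : algebraMap A B π ∈ P ^ e := by
      rw [he]
      exact Ideal.le_pow_ramificationIdx' (Ideal.mem_map_of_mem _ hπmem)
    have hex : ∃ c : B, ¬ (π ^ (k+1) ∣ Algebra.intTrace A B c) := by
      by_contra hcon
      push_neg at hcon
      apply hd.2
      set t : B := algebraMap A B (π ^ (k+1)) with ht
      have hπk0 : (π : A) ^ (k+1) ≠ 0 := pow_ne_zero _ hπ.ne_zero
      have ht0 : t ≠ 0 := fun h =>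
        hπk0 (FaithfulSMul.algebraMap_injective A B (by simpa [ht] using h))
      have hspan : (Ideal.span {t} : Ideal B) ≠ ⊥ := by
        simpa [Ideal.span_singleton_eq_bot] using ht0
      have hle : differentIdeal A B ≤ Ideal.span {t} := by
        rw [differentialIdeal_le_iff (K := K) (L := L) hspan]
        rintro _ ⟨v, hv, rfl⟩
        have hv2 : v ∈ (((Ideal.span {t} : Ideal B) : FractionalIdeal B⁰ L))⁻¹ := hv
        rw [FractionalIdeal.coeIdeal_span_singleton, FractionalIdeal.spanSingleton_inv,
          FractionalIdeal.mem_spanSingleton] at hv2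
        obtain ⟨b, hb⟩ := hv2
        obtain ⟨a, ha⟩ := hcon b
        rw [Submodule.mem_one]
        refine ⟨a, ?_⟩
        have hs : algebraMap B L t = algebraMap K L (algebraMap A K (π ^ (k+1))) := by
          rw [ht, ← IsScalarTower.algebraMap_apply, IsScalarTower.algebraMap_apply A K L]
        have hv' : v = (algebraMap A K (π ^ (k+1)))⁻¹ • algebraMap B L b := by
          rw [← hb, Algebra.smul_def, Algebra.smul_def, hs, map_inv₀]
          ring
        have hπK0 : algebraMap A K (π ^ (k+1)) ≠ 0 := fun h =>
          hπk0 (IsFractionRing.injective A K (by simpa using h))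
        rw [LinearMap.restrictScalars_apply, hv', map_smul, smul_eq_mul,
          ← Algebra.algebraMap_intTrace (A := A) (K := K) (L := L) b, ha, map_mul]
        field_simp
      refine hle.trans ?_
      rw [Ideal.span_le, Set.singleton_subset_iff]
      have h1 : t = (algebraMap A B π) ^ (k+1) := by rw [ht, map_pow]
      have h2 : (algebraMap A B π) ^ (k+1) ∈ (P ^ e) ^ (k+1) := Submodule.pow_mem_pow _ hπP _
      rw [← pow_mul] at h2
      have h3 : e * (k + 1) = 2 * (e * (d / e)) + e := by rw [hk]; ring
      have h4 : e * (d/e) + d % e = d := Nat.div_add_mod d e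
      have h5 : d % e < e := Nat.mod_lt d (Nat.pos_of_ne_zero he0)
      have h6 : d + 1 ≤ e * (k + 1) := by omega
      have h7 : P ^ (e * (k+1)) ≤ P ^ (d+1) := Ideal.pow_le_pow_right h6
      rw [h1]
      exact h7 h2
    obtain ⟨c, hc⟩ := hex
    set a₀ := Algebra.intTrace A B c with ha₀
    have ha₀0 : a₀ ≠ 0 := fun h => hc (by rw [h]; exact dvd_zero _)
    obtain ⟨n, u, hnu⟩ := IsDiscreteValuationRing.eq_unit_mul_pow_irreducible ha₀0 hπ
    have hnk : n ≤ k := by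
      by_contra hgt
      push_neg at hgt
      refine hc ⟨(u : A) * π ^ (n - (k+1)), ?_⟩
      rw [hnu]
      have h9 : n = (k+1) + (n - (k+1)) := by omega
      calc (↑u : A) * π ^ n = ↑u * (π^(k+1) * π^(n-(k+1))) := by rw [← pow_add, ← h9]
        _ = π^(k+1) * (↑u * π^(n-(k+1))) := by ring
    have hnm : n + N ≤ m := by omega
    have hzero : ∀ g, ρ g (0 : M) = 0 := fun g => by
      have h0 := hadd g 0 0
      rw [add_zero] at h0
      exact left_eq_add.mp h0
    have hsum : ∀ g (f : (L ≃ₐ[K] L) → M) (s : Finset (L ≃ₐ[K] L)),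
        ρ g (∑ i ∈ s, f i) = ∑ i ∈ s, ρ g (f i) := by
      intro g f s
      induction s using Finset.induction_on with
      | empty => simpa using hzero g
      | insert a s h ih => rw [Finset.sum_insert h, hadd, ih, Finset.sum_insert h]
    set w : M := ∑ g : L ≃ₐ[K] L, (galRestrict A K L B g c) • yy g with hw
    set T : M := ∑ g : L ≃ₐ[K] L, ρ g (c • x) with hT
    have hTinv : ∀ g, ρ g T = T := by
      intro g
      rw [hT, hsum]
      exact Fintype.sum_equiv (Equiv.mulLeft g) _ _ (fun h => (hmul g h (c • x)).symm)
    have htr : (∑ g : L ≃ₐ[K] L, galRestrict A K L B g c) = algebraMap A B a₀ := by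
      apply IsFractionRing.injective B L
      rw [map_sum]
      have h2 : algebraMap B L (algebraMap A B a₀) = algebraMap K L (algebraMap A K a₀) := by
        rw [← IsScalarTower.algebraMap_apply, IsScalarTower.algebraMap_apply A K L]
      rw [h2, ha₀, Algebra.algebraMap_intTrace (A := A) (K := K) (L := L) c,
        trace_eq_sum_automorphisms]
      exact Finset.sum_congr rfl fun g _ => algebraMap_galRestrict_apply A g c
    have hcomm : ∀ (b : B) (j : ℕ) (v : M), b • (π ^ j • v) = π ^ j • (b • v) := by
      intro b j v
      rw [← algebraMap_smul B (π ^ j) v, smul_smul, mul_comm, ← smul_smul, algebraMap_smul]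
    have hTeq : T = (algebraMap A B a₀) • x + π ^ (m+1) • w := by
      rw [hT, hw]
      have hterm : ∀ g : L ≃ₐ[K] L,
          ρ g (c • x) = (galRestrict A K L B g c) • x
            + π^(m+1) • ((galRestrict A K L B g c) • yy g) := by
        intro g
        rw [hsmul, eq_add_of_sub_eq (hyy g), smul_add, hcomm]
        exact add_comm _ _
      rw [Finset.sum_congr rfl fun g _ => hterm g, Finset.sum_add_distrib,
        ← Finset.sum_smul, htr, ← Finset.smul_sum]
    set z₁ : M := (u : A) • x + π ^ (m + 1 - n) • w with hz₁
    have hπz₁ : π ^ n • z₁ = T := by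
      rw [hz₁, hTeq, smul_add, smul_smul, smul_smul, ← pow_add]
      congr 1
      · rw [algebraMap_smul, hnu, mul_comm]
      · congr 2
        omega
    have hz₁inv : ∀ g, ρ g z₁ = z₁ := by
      intro g
      apply hreg n
      show π ^ n • ρ g z₁ = π ^ n • z₁
      rw [← hAsmul, hπz₁]
      exact hTinv g
    obtain ⟨v, hv⟩ : ∃ v : M, v = ((u⁻¹ : Aˣ) : A) • w := ⟨_, rfl⟩
    refine ⟨((u⁻¹ : Aˣ) : A) • z₁, fun g => by rw [hAsmul, hz₁inv g], ?_⟩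
    refine ⟨-(π ^ (m - n - N) • v), ?_⟩
    have hxz : ((u⁻¹ : Aˣ) : A) • z₁ = x + π ^ (m + 1 - n) • v := by
      rw [hz₁, smul_add, smul_smul, Units.inv_mul, one_smul, smul_comm, ← hv]
    rw [hxz, smul_neg, smul_smul, ← pow_add]
    have h10 : (N+1) + (m - n - N) = m + 1 - n := by omega
    rw [h10]
    abel
  · exact fun z hz g => ⟨0, by rw [hz g, sub_self, smul_zero]⟩
end

section
/- Let M be a semi-linear O_L[G]-module, flat over O_L. Then the canonical homomorphism lim_n (M^G/π^{n+1}M^G) → lim_n (M/π^{n+1}M)^G = (lim_n M/π^{n+1}M)^G is an isomorphism; in other words, the π-adic completion of M^G maps isomorphically onto the G-invariants of the π-adic completion of M. -/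
/-- Let `M` be a semi-linear `O_L[G]`-module, flat over `O_L = B`.  Then the canonical
homomorphism `lim_n (M^G/π^{n+1}M^G) → lim_n (M/π^{n+1}M)^G = (lim_n M/π^{n+1}M)^G`
is an isomorphism.  Elementwise:
(surjectivity) every compatible system `(x_n)` of classes that are `G`-invariant
modulo `π^{n+1}M` is realized, compatibly in `M^G/π^{n+1}M^G`, by `G`-invariant
elements `z_n` with `x_n ≡ z_n (mod π^{n+1}M)`;
(injectivity) a compatible system `(z_n)` of `G`-invariant elements which vanishes in
`lim_n M/π^{n+1}M` already vanishes in `lim_n M^G/π^{n+1}M^G`. -/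
theorem limit_invariants_mod_pi_iso
    (A K L B : Type*) [CommRing A] [CommRing B] [Field K] [Field L]
    [IsDomain A] [IsDiscreteValuationRing A]
    [Algebra A K] [IsFractionRing A K]
    [Algebra K L] [FiniteDimensional K L] [IsGalois K L]
    [Algebra A B] [Algebra B L] [Algebra A L]
    [IsScalarTower A B L] [IsScalarTower A K L]
    [IsIntegralClosure B A L] [IsDomain B]
    (M : Type*) [AddCommGroup M] [Module B M] [Module A M] [IsScalarTower A B M]
    [Module.Flat B M]
    (ρ : (L ≃ₐ[K] L) → M → M)
    (hone : ∀ x, ρ 1 x = x)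
    (hmul : ∀ g h x, ρ (g * h) x = ρ g (ρ h x))
    (hadd : ∀ g x y, ρ g (x + y) = ρ g x + ρ g y)
    (hsmul : ∀ g (b : B) x, ρ g (b • x) = galRestrict A K L B g b • ρ g x)
    (π : A) (hπ : Irreducible π) :
    (∀ x : ℕ → M,
      (∀ n, ∃ y : M, x (n + 1) - x n = π ^ (n + 1) • y) →
      (∀ n g, ∃ y : M, ρ g (x n) - x n = π ^ (n + 1) • y) →
      ∃ z : ℕ → M,
        (∀ n g, ρ g (z n) = z n) ∧
        (∀ n, ∃ w : M, (∀ g, ρ g w = w) ∧ z (n + 1) - z n = π ^ (n + 1) • w) ∧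
        (∀ n, ∃ y : M, x n - z n = π ^ (n + 1) • y)) ∧
    (∀ z : ℕ → M,
      (∀ n g, ρ g (z n) = z n) →
      (∀ n, ∃ w : M, (∀ g, ρ g w = w) ∧ z (n + 1) - z n = π ^ (n + 1) • w) →
      (∀ n, ∃ y : M, z n = π ^ (n + 1) • y) →
      ∀ n, ∃ w : M, (∀ g, ρ g w = w) ∧ z n = π ^ (n + 1) • w) := by
  classical
  -- basic properties of ρ
  have hzero : ∀ g, ρ g 0 = 0 := by
    intro g
    have h := hadd g 0 0
    rw [add_zero] at h
    exact (left_eq_add.mp h)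
  have hneg : ∀ g m, ρ g (-m) = -ρ g m := by
    intro g m
    have h := hadd g m (-m)
    rw [add_neg_cancel, hzero] at h
    exact (neg_eq_of_add_eq_zero_right h.symm).symm
  have hsub : ∀ g m m', ρ g (m - m') = ρ g m - ρ g m' := by
    intro g m m'
    rw [sub_eq_add_neg, hadd, hneg, sub_eq_add_neg]
  have hAsmul : ∀ g (a : A) (m : M), ρ g (a • m) = a • ρ g m := by
    intro g a m
    rw [← algebraMap_smul B a m, hsmul, AlgEquiv.commutes, algebraMap_smul]
  have hcomm : ∀ (a : A) (b : B) (m : M), a • b • m = b • a • m := by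
    intro a b m
    rw [← algebraMap_smul B a m, ← algebraMap_smul B a (b • m), smul_smul, smul_smul,
      mul_comm]
  -- injectivity of multiplication by powers of π on M
  have hABinj : Function.Injective (algebraMap A B) := by
    have h1 : Function.Injective (algebraMap A L) := by
      rw [IsScalarTower.algebraMap_eq A K L]
      exact (algebraMap K L).injective.comp (IsFractionRing.injective A K)
    rw [IsScalarTower.algebraMap_eq A B L] at h1
    exact Function.Injective.of_comp h1
  have hπB : algebraMap A B π ≠ 0 := by
    intro h
    exact hπ.ne_zero (hABinj (by rw [h, map_zero]))
  have hMreg : ∀ b : B, b ≠ 0 → IsSMulRegular M b := by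
    intro b hb
    have h1 : IsSMulRegular B b := by
      intro p q h
      exact mul_left_cancel₀ hb (by simpa [smul_eq_mul] using h)
    have h2 := h1.lTensor (R := B) (M := M)
    exact h2.of_injective (TensorProduct.rid B M).symm.toLinearMap
      (TensorProduct.rid B M).symm.injective
  have hπreg : ∀ k : ℕ, IsSMulRegular M ((π : A) ^ k) := by
    intro k
    have h := hMreg (algebraMap A B π ^ k) (pow_ne_zero k hπB)
    rw [← map_pow] at h
    exact (isSMulRegular_algebraMap_iff (A := B) (r := π ^ k)).mp h
  -- an integral element with nonzero trace
  have hsep : Algebra.IsSeparable K L := IsGalois.to_isSeparable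
  obtain ⟨ℓ, hℓ⟩ : ∃ ℓ : L, Algebra.trace K L ℓ ≠ 0 := by
    by_contra h
    push_neg at h
    exact Algebra.trace_ne_zero K L (LinearMap.ext h)
  have halg : IsAlgebraic A ℓ :=
    (IsFractionRing.isAlgebraic_iff A K L).mpr (Algebra.IsAlgebraic.isAlgebraic ℓ)
  have hALinj : Function.Injective (algebraMap A L) := by
    rw [IsScalarTower.algebraMap_eq A K L]
    exact (algebraMap K L).injective.comp (IsFractionRing.injective A K)
  obtain ⟨xint, a, ha, hax⟩ : ∃ (x : integralClosure A L) (a : A), a ≠ 0 ∧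
      algebraMap A L a * ℓ = x := by
    obtain ⟨a, ha, hi⟩ := halg.exists_integral_multiple
    exact ⟨⟨a • ℓ, hi⟩, a, ha, (Algebra.smul_def a ℓ).symm⟩
  obtain ⟨e, he⟩ := (IsIntegralClosure.isIntegral_iff (A := B) (B := L)).mp xint.2
  have htne : Algebra.trace K L (algebraMap B L e) ≠ 0 := by
    rw [he, ← hax]
    have h2 : algebraMap A L a * ℓ = algebraMap A K a • ℓ := by
      rw [Algebra.smul_def, IsScalarTower.algebraMap_apply A K L]
    rw [h2, map_smul, smul_eq_mul]
    exact mul_ne_zero ((map_ne_zero_iff _ (IsFractionRing.injective A K)).mpr ha) hℓ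
  set t : K := Algebra.trace K L (algebraMap B L e) with ht
  obtain ⟨s, hs⟩ : ∃ s : B, s = ∑ σ : L ≃ₐ[K] L, galRestrict A K L B σ e := ⟨_, rfl⟩
  have hst : algebraMap B L s = algebraMap K L t := by
    rw [hs, map_sum, ht, trace_eq_sum_automorphisms]
    exact Finset.sum_congr rfl fun σ _ => algebraMap_galRestrict_apply A σ e
  have hBLinj : Function.Injective (algebraMap B L) :=
    IsIntegralClosure.algebraMap_injective B A L
  have hint : IsIntegral A t := by
    have h1 : IsIntegral A (algebraMap K L t) := by
      rw [← hst]
      exact (IsIntegralClosure.isIntegral A L s).algebraMap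
    exact IsIntegral.tower_bot (algebraMap K L).injective h1
  obtain ⟨d, hd⟩ := IsIntegrallyClosed.isIntegral_iff.mp hint
  have hdne : d ≠ 0 := by
    intro h
    exact htne (by rw [← hd, h, map_zero])
  have hds : algebraMap A B d = s := by
    apply hBLinj
    rw [← IsScalarTower.algebraMap_apply A B L, IsScalarTower.algebraMap_apply A K L, hd, hst]
  obtain ⟨c, u, hdu⟩ := IsDiscreteValuationRing.eq_unit_mul_pow_irreducible hdne hπ
  -- the averaging operator
  obtain ⟨T, hT⟩ : ∃ T : M → M, T = fun m => ∑ σ : L ≃ₐ[K] L, ρ σ (e • m) := ⟨_, rfl⟩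
  have hTinv : ∀ g m, ρ g (T m) = T m := by
    intro g m
    let φ : M →+ M := AddMonoidHom.mk' (ρ g) (hadd g)
    have h1 : ρ g (T m) = ∑ σ : L ≃ₐ[K] L, ρ g (ρ σ (e • m)) := by
      simp only [hT]
      exact map_sum φ _ _
    rw [h1]
    have h2 : ∀ σ : L ≃ₐ[K] L, ρ g (ρ σ (e • m)) = ρ (g * σ) (e • m) :=
      fun σ => (hmul g σ _).symm
    rw [Finset.sum_congr rfl fun σ _ => h2 σ]
    simp only [hT]
    exact Fintype.sum_equiv (Equiv.mulLeft g) _ _ (fun σ => rfl)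
  have hTsub : ∀ m m', T (m - m') = T m - T m' := by
    intro m m'
    simp only [hT, smul_sub, hsub, Finset.sum_sub_distrib]
  have hTA : ∀ (a : A) (m : M), T (a • m) = a • T m := by
    intro a m
    simp only [hT]
    rw [Finset.smul_sum]
    refine Finset.sum_congr rfl fun σ _ => ?_
    rw [← hcomm a e m]
    exact hAsmul σ a (e • m)
  have hTcong : ∀ (k : ℕ) (m : M), (∀ g, ∃ y, ρ g m - m = π ^ k • y) →
      ∃ Y, T m = d • m + π ^ k • Y := by
    intro k m hm
    choose y hy using hm
    refine ⟨∑ σ : L ≃ₐ[K] L, galRestrict A K L B σ e • y σ, ?_⟩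
    have h1 : ∀ σ : L ≃ₐ[K] L, ρ σ (e • m) =
        galRestrict A K L B σ e • m + π ^ k • (galRestrict A K L B σ e • y σ) := by
      intro σ
      rw [hsmul]
      have h2 : ρ σ m = m + π ^ k • y σ := by
        rw [← hy σ]; abel
      rw [h2, smul_add, ← hcomm]
    simp only [hT]
    rw [Finset.sum_congr rfl fun σ _ => h1 σ, Finset.sum_add_distrib, ← Finset.sum_smul,
      ← Finset.smul_sum, ← hs, ← hds, algebraMap_smul]
  constructor
  · -- surjectivity
    intro x hx1 hx2
    have hchain : ∀ n k, ∃ y, x (n + k) - x n = π ^ (n + 1) • y := by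
      intro n k
      induction k with
      | zero => exact ⟨0, by simp⟩
      | succ k ih =>
        obtain ⟨y, hy⟩ := ih
        obtain ⟨y', hy'⟩ := hx1 (n + k)
        refine ⟨π ^ k • y' + y, ?_⟩
        have h3 : x (n + (k + 1)) - x n = (x (n + k + 1) - x (n + k)) + (x (n + k) - x n) := by
          rw [show n + (k + 1) = n + k + 1 from rfl]; abel
        rw [h3, hy, hy', smul_add, smul_smul, ← pow_add,
          show n + 1 + k = n + k + 1 from by omega]
    have hTm : ∀ n, ∃ Y, T (x (n + c)) = d • x (n + c) + π ^ (n + c + 1) • Y :=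
      fun n => hTcong (n + c + 1) (x (n + c)) (fun g => hx2 (n + c) g)
    choose Y hY using hTm
    obtain ⟨m, hm⟩ : ∃ m : ℕ → M,
        m = fun n => ((u : A)) • x (n + c) + π ^ (n + 1) • Y n := ⟨_, rfl⟩
    have hTm' : ∀ n, T (x (n + c)) = π ^ c • m n := by
      intro n
      have hexp : (π : A) ^ (n + c + 1) = π ^ c * π ^ (n + 1) := by
        rw [← pow_add]
        congr 1
        omega
      rw [hY n]
      simp only [hm]
      rw [hdu, hexp, smul_add, smul_smul, smul_smul, mul_comm (π ^ c) ((u : A))]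
    have hminv : ∀ n g, ρ g (m n) = m n := by
      intro n g
      apply hπreg c
      show π ^ c • ρ g (m n) = π ^ c • m n
      rw [← hAsmul, ← hTm', hTinv, hTm']
    refine ⟨fun n => ((u⁻¹ : Aˣ) : A) • m n, ?_, ?_, ?_⟩
    · intro n g
      rw [hAsmul, hminv]
    · intro n
      obtain ⟨y', hy'⟩ := hx1 (n + c)
      have key : m (n + 1) - m n = π ^ (n + 1) • T y' := by
        apply hπreg c
        show π ^ c • (m (n + 1) - m n) = π ^ c • (π ^ (n + 1) • T y')
        rw [smul_sub, ← hTm', ← hTm', ← hTsub,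
          show n + 1 + c = n + c + 1 from by omega, hy', hTA, smul_smul, ← pow_add,
          show c + (n + 1) = n + c + 1 from by omega]
      refine ⟨((u⁻¹ : Aˣ) : A) • T y', fun g => by rw [hAsmul, hTinv], ?_⟩
      show ((u⁻¹ : Aˣ) : A) • m (n + 1) - ((u⁻¹ : Aˣ) : A) • m n =
        π ^ (n + 1) • (((u⁻¹ : Aˣ) : A) • T y')
      rw [← smul_sub, key, smul_comm]
    · intro n
      obtain ⟨y, hy⟩ := hchain n c
      refine ⟨-(y + ((u⁻¹ : Aˣ) : A) • Y n), ?_⟩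
      have hz : ((u⁻¹ : Aˣ) : A) • m n = x (n + c) + π ^ (n + 1) • (((u⁻¹ : Aˣ) : A) • Y n) := by
        simp only [hm]
        rw [smul_add, smul_smul, Units.inv_mul, one_smul, smul_comm]
      show x n - ((u⁻¹ : Aˣ) : A) • m n = π ^ (n + 1) • -(y + ((u⁻¹ : Aˣ) : A) • Y n)
      rw [hz, smul_neg, smul_add, ← hy]
      abel
  · -- injectivity
    intro z hz1 _ hz3 n
    obtain ⟨y, hy⟩ := hz3 n
    refine ⟨y, fun g => ?_, hy⟩
    apply hπreg (n + 1)
    show π ^ (n + 1) • ρ g y = π ^ (n + 1) • y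
    rw [← hAsmul, ← hy]
    exact hz1 n g
end

section
/- Suppose O_K is henselian. Let E be an elliptic curve over K, L/K a finite Galois extension such that E_L has semi-stable reduction, i.e. a minimal integral Weierstrass equation W' of E_L over the localization of O_L at a maximal ideal 𝔭 satisfies v_L(Δ(W')) = 0 or v_L(c₄(W')) = 0. Let W be a minimal integral Weierstrass equation of E over O_K. Then v_L(Δ(W)) − v_L(Δ(W')) = min{ v_L(Δ(W)), 3·v_L(c₄(W)) }, where v_L(Δ(W)) = e_{L/K}·v_K(Δ(W)); equivalently, the base change conductor c(E) := (v_L(Δ(W)) − v_L(Δ(W')))/(12·e_{L/K}) equals min{ v_K(Δ(W))/12, v_K(c₄(W))/4 }. -/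
open WeierstrassCurve

/-- `W` is an integral Weierstrass equation (model) over `R` of the Weierstrass
equation `E` over the fraction field `F`. -/
def IsIntegralModel (R F : Type*) [CommRing R] [CommRing F] [Algebra R F]
    (E : WeierstrassCurve F) (W : WeierstrassCurve R) : Prop :=
  ∃ C : VariableChange F, W.map (algebraMap R F) = C • E

/-- `W` is a minimal integral Weierstrass equation of `E` over the discrete valuation
ring `R`. -/
def IsMinimalModel (R F : Type*) [CommRing R] [CommRing F] [Algebra R F]
    (E : WeierstrassCurve F) (W : WeierstrassCurve R) : Prop :=
  IsIntegralModel R F E W ∧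
    ∀ W' : WeierstrassCurve R, IsIntegralModel R F E W' → W.Δ ∣ W'.Δ

/-- The emultiplicity of a prime in a unit times a power of the prime. -/
lemma em_isUnit_mul_pow {R : Type*} [CommMonoidWithZero R] [IsCancelMulZero R] {p : R} (hp : Prime p) {v : R}
    (hv : IsUnit v) (n : ℕ) : emultiplicity p (v * p ^ n) = n := by
  rw [emultiplicity_mul hp, emultiplicity_of_isUnit_right hp.not_isUnit hv,
    emultiplicity_pow_self_of_prime hp, zero_add]

/-- Membership in powers of a maximal ideal can be checked in the localization. -/
lemma mem_pow_iff_loc {B Bp : Type*} [CommRing B] [IsDomain B] [CommRing Bp] [IsDomain Bp]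
    [Algebra B Bp] (P : Ideal B) [P.IsMaximal] [IsLocalization.AtPrime Bp P]
    (b : B) (n : ℕ) :
    b ∈ P ^ n ↔ algebraMap B Bp b ∈ (P ^ n).map (algebraMap B Bp) := by
  constructor
  · exact fun h => Ideal.mem_map_of_mem _ h
  · intro h
    rcases n.eq_zero_or_pos with rfl | hn
    · simp
    obtain ⟨⟨⟨a, ha⟩, s⟩, hs⟩ := (IsLocalization.mem_map_algebraMap_iff P.primeCompl Bp).mp h
    rw [← map_mul] at hs
    have hinj : Function.Injective (algebraMap B Bp) :=
      IsLocalization.injective Bp P.primeCompl_le_nonZeroDivisors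
    have hbs : b * (s : B) ∈ P ^ n := by rw [hinj hs]; exact ha
    have hrad : (P ^ n).radical = P := by
      rw [Ideal.radical_pow P hn.ne', ‹P.IsMaximal›.isPrime.radical]
    have hprimary : (P ^ n).IsPrimary :=
      Ideal.isPrimary_of_isMaximal_radical (by rw [hrad]; infer_instance)
    rcases (Ideal.isPrimary_iff.mp hprimary).2 hbs with h' | h'
    · exact h'
    · rw [hrad] at h'; exact absurd h' s.2

/-- The supremum defining the ramification index computed via a uniformizer of the
localization. -/
lemma sSup_eq_r {B Bp : Type*} [CommRing B] [IsDomain B] [CommRing Bp] [IsDomain Bp]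
    [Algebra B Bp] (P : Ideal B) [P.IsMaximal] [IsLocalization.AtPrime Bp P]
    [IsDiscreteValuationRing Bp] {πL : Bp} (hπL : Irreducible πL)
    {b : B} {r : ℕ} {u : Bpˣ}
    (hu : algebraMap B Bp b = u * πL ^ r) :
    sSup {n : ℕ | Ideal.span {b} ≤ P ^ n} = r := by
  have hM : P.map (algebraMap B Bp) = IsLocalRing.maximalIdeal Bp :=
    IsLocalization.AtPrime.map_eq_maximalIdeal P Bp
  have hMπ : IsLocalRing.maximalIdeal Bp = Ideal.span {πL} :=
    (IsDiscreteValuationRing.irreducible_iff_uniformizer πL).mp hπL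
  have hset : {n : ℕ | Ideal.span {b} ≤ P ^ n} = Set.Iic r := by
    ext n
    simp only [Set.mem_setOf_eq, Set.mem_Iic, Ideal.span_singleton_le_iff_mem]
    rw [mem_pow_iff_loc (Bp := Bp) P b n, Ideal.map_pow, hM, hMπ, Ideal.span_singleton_pow,
      Ideal.mem_span_singleton, hu, Units.dvd_mul_left]
    exact pow_dvd_pow_iff hπL.ne_zero hπL.not_isUnit
  rw [hset]
  exact csSup_Iic

/-- The final elementary arithmetic computation in `ℕ∞`. -/
lemma final_arith (e dA d' cA c' m : ℕ) (h1 : e * dA = d' + 3 * m) (h2 : e * cA = c' + m)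
    (h3 : d' = 0 ∨ c' = 0) :
    (e : ℕ∞) * (dA : ℕ∞) - (d' : ℕ∞) = min ((e : ℕ∞) * dA) (3 * ((e : ℕ∞) * cA)) := by
  have h4 : (3 : ℕ∞) = ((3 : ℕ) : ℕ∞) := rfl
  have h5 : ∀ a b : ℕ, ((min a b : ℕ) : ℕ∞) = min (a : ℕ∞) (b : ℕ∞) := fun a b =>
    WithTop.coe_min a b
  rw [h4, ← Nat.cast_mul, ← Nat.cast_mul, ← Nat.cast_mul, ← ENat.coe_sub, ← h5,
    Nat.cast_inj]
  omega

/-- **Base change conductor of an elliptic curve.**  Suppose `O_K = A` is henselian.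
Let `E` be an elliptic curve over `K`, `L/K` a finite Galois extension such that `E_L`
has semi-stable reduction at the maximal ideal `P` of `O_L = B`, i.e. a minimal
integral Weierstrass equation `W'` of `E_L` over the localization `Bp` of `B` at `P`
satisfies `v_L(Δ(W')) = 0` or `v_L(c₄(W')) = 0`.  Let `W` be a minimal integral
Weierstrass equation of `E` over `A`.  Then
`v_L(Δ(W)) − v_L(Δ(W')) = min { v_L(Δ(W)), 3·v_L(c₄(W)) }`,
where `v_L(Δ(W)) = e_{L/K}·v_K(Δ(W))` and valuations are computed in `ℕ∞` as
`emultiplicity` of a uniformizer (so that `v(0) = ⊤`). -/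
theorem base_change_conductor_formula
    (A K L B : Type*) [CommRing A] [CommRing B] [Field K] [Field L]
    [IsDomain A] [IsDiscreteValuationRing A] [HenselianLocalRing A]
    [Algebra A K] [IsFractionRing A K]
    [Algebra K L] [FiniteDimensional K L] [IsGalois K L]
    [Algebra A B] [Algebra B L] [Algebra A L]
    [IsScalarTower A B L] [IsScalarTower A K L]
    [IsIntegralClosure B A L] [IsDomain B]
    (P : Ideal B) [P.IsMaximal]
    (Bp : Type*) [CommRing Bp] [IsDomain Bp] [Algebra B Bp]
    [IsLocalization.AtPrime Bp P] [Algebra Bp L] [IsScalarTower B Bp L]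
    (E : WeierstrassCurve K) (hE : E.Δ ≠ 0)
    (W : WeierstrassCurve A) (hW : IsMinimalModel A K E W)
    (W' : WeierstrassCurve Bp)
    (hW' : IsMinimalModel Bp L (E.map (algebraMap K L)) W')
    (π : A) (hπ : Irreducible π)
    (πL : Bp) (hπL : Irreducible πL)
    (hss : emultiplicity πL W'.Δ = 0 ∨ emultiplicity πL W'.c₄ = 0)
    (e : ℕ) (he : e = Ideal.ramificationIdx' (IsLocalRing.maximalIdeal A) P) :
    (e : ℕ∞) * emultiplicity π W.Δ - emultiplicity πL W'.Δ =
      min ((e : ℕ∞) * emultiplicity π W.Δ) (3 * ((e : ℕ∞) * emultiplicity π W.c₄)) := by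
  -- instances
  haveI : IsDedekindDomain B := IsIntegralClosure.isDedekindDomain A K L B
  haveI : IsLocalRing Bp := IsLocalization.AtPrime.isLocalRing Bp P
  have hPbot : P ≠ ⊥ := by
    intro h
    have h1 : πL ∈ IsLocalRing.maximalIdeal Bp := hπL.not_isUnit
    rw [← IsLocalization.AtPrime.map_eq_maximalIdeal P Bp, h, Ideal.map_bot] at h1
    exact not_irreducible_zero (h1 ▸ hπL)
  haveI : IsDiscreteValuationRing Bp :=
    IsLocalization.AtPrime.isDiscreteValuationRing_of_dedekind_domain B hPbot Bp
  haveI : IsFractionRing B L := IsIntegralClosure.isFractionRing_of_finite_extension A K L B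
  haveI : IsFractionRing Bp L :=
    IsFractionRing.isFractionRing_of_isDomain_of_isLocalization P.primeCompl Bp L
  -- the map from A to Bp
  set f : A →+* Bp := (algebraMap B Bp).comp (algebraMap A B) with hfdef
  have hcomp : (algebraMap Bp L).comp f = algebraMap A L := by
    rw [hfdef, ← RingHom.comp_assoc, ← IsScalarTower.algebraMap_eq B Bp L,
      ← IsScalarTower.algebraMap_eq A B L]
  have hAL : algebraMap A L = (algebraMap K L).comp (algebraMap A K) :=
    IsScalarTower.algebraMap_eq A K L
  -- injectivity
  have hinjAL : Function.Injective (algebraMap A L) := by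
    rw [hAL]; exact (algebraMap K L).injective.comp (IsFractionRing.injective A K)
  have hinjAB : Function.Injective (algebraMap A B) := by
    have h := IsScalarTower.algebraMap_eq A B L
    intro x y hxy
    apply hinjAL
    rw [h]; simp only [RingHom.comp_apply, hxy]
  have hinjBBp : Function.Injective (algebraMap B Bp) :=
    IsLocalization.injective Bp P.primeCompl_le_nonZeroDivisors
  have hinjf : Function.Injective f := hinjBBp.comp hinjAB
  have hinjBpL : Function.Injective (algebraMap Bp L) := IsFractionRing.injective Bp L
  -- models
  obtain ⟨C, hC⟩ := hW.1
  obtain ⟨C', hC'⟩ := hW'.1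
  have hC2 : W.map (algebraMap A K) = C • E := hC
  have hC'2 : W'.map (algebraMap Bp L) = C' • (E.map (algebraMap K L)) := hC'
  have hCΔ : algebraMap A K W.Δ = ↑C.u⁻¹ ^ 12 * E.Δ := by
    have h := congrArg WeierstrassCurve.Δ hC2
    rwa [WeierstrassCurve.map_Δ, WeierstrassCurve.variableChange_Δ] at h
  have hCc : algebraMap A K W.c₄ = ↑C.u⁻¹ ^ 4 * E.c₄ := by
    have h := congrArg WeierstrassCurve.c₄ hC2
    rwa [WeierstrassCurve.map_c₄, WeierstrassCurve.variableChange_c₄] at h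
  have hC'Δ : algebraMap Bp L W'.Δ = ↑C'.u⁻¹ ^ 12 * algebraMap K L E.Δ := by
    have h := congrArg WeierstrassCurve.Δ hC'2
    rwa [WeierstrassCurve.map_Δ, WeierstrassCurve.variableChange_Δ,
      WeierstrassCurve.map_Δ] at h
  have hC'c : algebraMap Bp L W'.c₄ = ↑C'.u⁻¹ ^ 4 * algebraMap K L E.c₄ := by
    have h := congrArg WeierstrassCurve.c₄ hC'2
    rwa [WeierstrassCurve.map_c₄, WeierstrassCurve.variableChange_c₄,
      WeierstrassCurve.map_c₄] at h
  -- nonvanishing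
  have hELΔ : algebraMap K L E.Δ ≠ 0 := fun h => hE ((algebraMap K L).injective (by simp [h]))
  have hΔW : W.Δ ≠ 0 := by
    intro h
    apply hE
    have := hCΔ
    rw [h, map_zero] at this
    rcases mul_eq_zero.mp this.symm with h' | h'
    · exact absurd h' (pow_ne_zero _ (Units.ne_zero _))
    · exact h'
  have hΔW' : W'.Δ ≠ 0 := by
    intro h
    have := hC'Δ
    rw [h, map_zero] at this
    rcases mul_eq_zero.mp this.symm with h' | h'
    · exact absurd h' (pow_ne_zero _ (Units.ne_zero _))
    · exact hELΔ h'
  -- the comparison unit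
  set v : L := algebraMap K L ↑C.u⁻¹ * ↑C'.u with hvdef
  have hv : v ≠ 0 := by
    apply mul_ne_zero
    · intro h
      refine Units.ne_zero C.u⁻¹ ((algebraMap K L).injective ?_)
      rw [h, map_zero]
    · exact Units.ne_zero C'.u
  have hALΔ : ∀ x : A, algebraMap A L x = algebraMap K L (algebraMap A K x) := fun x => by
    rw [hAL]; rfl
  have claimΔ : algebraMap A L W.Δ = v ^ 12 * algebraMap Bp L W'.Δ := by
    rw [hALΔ, hCΔ, hC'Δ, map_mul, map_pow, hvdef]
    have h1 : ((C.u⁻¹ : Kˣ) : K) = ((C.u : K))⁻¹ := Units.val_inv_eq_inv_val C.u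
    have h2 : ((C'.u⁻¹ : Lˣ) : L) = ((C'.u : L))⁻¹ := Units.val_inv_eq_inv_val C'.u
    rw [h1, h2, map_inv₀]
    field_simp
    try ring
  have claimc : algebraMap A L W.c₄ = v ^ 4 * algebraMap Bp L W'.c₄ := by
    rw [hALΔ, hCc, hC'c, map_mul, map_pow, hvdef]
    have h1 : ((C.u⁻¹ : Kˣ) : K) = ((C.u : K))⁻¹ := Units.val_inv_eq_inv_val C.u
    have h2 : ((C'.u⁻¹ : Lˣ) : L) = ((C'.u : L))⁻¹ := Units.val_inv_eq_inv_val C'.u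
    rw [h1, h2, map_inv₀]
    field_simp
    try ring
  -- W.map f is an integral model of E_L over Bp
  have hintmodel : IsIntegralModel Bp L (E.map (algebraMap K L)) (W.map f) := by
    refine ⟨C.map (algebraMap K L), ?_⟩
    rw [WeierstrassCurve.map_map, hcomp, hAL, ← WeierstrassCurve.map_map, hC2]
    show _ = (C.map (algebraMap K L)) • (E.map (algebraMap K L))
    rw [← WeierstrassCurve.map_variableChange]
  obtain ⟨t, ht⟩ := hW'.2 _ hintmodel
  rw [WeierstrassCurve.map_Δ] at ht
  -- `ht : f W.Δ = W'.Δ * t`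
  have hBpLΔ : algebraMap Bp L (f W.Δ) = algebraMap A L W.Δ := by
    rw [← hcomp]; rfl
  have hbt : algebraMap Bp L t = v ^ 12 := by
    have h := congrArg (algebraMap Bp L) ht
    rw [hBpLΔ, claimΔ, map_mul] at h
    have h' : algebraMap Bp L W'.Δ * algebraMap Bp L t
        = algebraMap Bp L W'.Δ * v ^ 12 := by rw [← h]; ring
    exact mul_left_cancel₀ (fun hh => hΔW' (hinjBpL (by simp [hh]))) h'
  -- v ^ 4 is in Bp
  obtain ⟨s, hs⟩ : ∃ s : Bp, algebraMap Bp L s = v ^ 4 := by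
    apply IsIntegrallyClosed.isIntegral_iff.mp
    refine ⟨Polynomial.X ^ 3 - Polynomial.C t, Polynomial.monic_X_pow_sub_C t (by norm_num), ?_⟩
    simp only [Polynomial.eval₂_sub, Polynomial.eval₂_pow, Polynomial.eval₂_X,
      Polynomial.eval₂_C]
    rw [← pow_mul, hbt]
    norm_num
  have hs0 : s ≠ 0 := fun h => pow_ne_zero 4 hv (by rw [← hs, h, map_zero])
  have hs3 : s ^ 3 = t := by
    apply hinjBpL
    rw [map_pow, hs, ← pow_mul, hbt]
  have hfΔ : f W.Δ = W'.Δ * s ^ 3 := by rw [ht, hs3]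
  have hfc : f W.c₄ = W'.c₄ * s := by
    apply hinjBpL
    have hBpLc : algebraMap Bp L (f W.c₄) = algebraMap A L W.c₄ := by rw [← hcomp]; rfl
    rw [hBpLc, claimc, map_mul, hs]
    ring
  -- decompositions
  have hπp : Prime π := hπ.prime
  have hπLp : Prime πL := hπL.prime
  have hfπ0 : f π ≠ 0 := fun h => hπ.ne_zero (hinjf (by rw [h, map_zero]))
  obtain ⟨r, u₃, hu₃⟩ := IsDiscreteValuationRing.eq_unit_mul_pow_irreducible hfπ0 hπL
  obtain ⟨dA, u₀, hu₀⟩ := IsDiscreteValuationRing.eq_unit_mul_pow_irreducible hΔW hπ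
  obtain ⟨d', u₁, hu₁⟩ := IsDiscreteValuationRing.eq_unit_mul_pow_irreducible hΔW' hπL
  obtain ⟨m, u₂, hu₂⟩ := IsDiscreteValuationRing.eq_unit_mul_pow_irreducible hs0 hπL
  have hemΔA : emultiplicity π W.Δ = (dA : ℕ∞) := by
    rw [hu₀]; exact em_isUnit_mul_pow hπp u₀.isUnit dA
  have hemΔ' : emultiplicity πL W'.Δ = (d' : ℕ∞) := by
    rw [hu₁]; exact em_isUnit_mul_pow hπLp u₁.isUnit d'
  have hems : emultiplicity πL s = (m : ℕ∞) := by
    rw [hu₂]; exact em_isUnit_mul_pow hπLp u₂.isUnit m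
  have hemfπ : emultiplicity πL (f π) = (r : ℕ∞) := by
    rw [hu₃]; exact em_isUnit_mul_pow hπLp u₃.isUnit r
  -- the ramification index equals r
  have her : e = r := by
    have hmax : IsLocalRing.maximalIdeal A = Ideal.span {π} :=
      (IsDiscreteValuationRing.irreducible_iff_uniformizer π).mp hπ
    have hmap : Ideal.map (algebraMap A B) (IsLocalRing.maximalIdeal A)
        = Ideal.span {algebraMap A B π} := by
      rw [hmax, Ideal.map_span, Set.image_singleton]
    rw [he, Ideal.ramificationIdx']
    simp_rw [hmap]
    exact sSup_eq_r P hπL hu₃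
  -- r is positive
  have hr1 : 0 < r := by
    haveI : Algebra.IsIntegral A B := IsIntegralClosure.isIntegral_algebra A L
    have hcomax : (P.comap (algebraMap A B)).IsMaximal :=
      Ideal.isMaximal_comap_of_isIntegral_of_isMaximal P
    have hcoeq : P.comap (algebraMap A B) = IsLocalRing.maximalIdeal A :=
      IsLocalRing.eq_maximalIdeal hcomax
    have hπP : algebraMap A B π ∈ P := by
      have hmem : π ∈ P.comap (algebraMap A B) := by
        rw [hcoeq]; exact hπ.not_isUnit
      exact hmem
    have hdvd : πL ∣ f π := by
      have : f π ∈ IsLocalRing.maximalIdeal Bp := by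
        rw [← IsLocalization.AtPrime.map_eq_maximalIdeal P Bp]
        exact Ideal.mem_map_of_mem _ hπP
      rwa [(IsDiscreteValuationRing.irreducible_iff_uniformizer πL).mp hπL,
        Ideal.mem_span_singleton] at this
    rcases Nat.eq_zero_or_pos r with hr | hr
    · rw [hu₃, hr, pow_zero, mul_one] at hdvd
      exact absurd (isUnit_of_dvd_unit hdvd u₃.isUnit) hπL.not_isUnit
    · exact hr
  -- the Δ multiplicity relation
  have eA : emultiplicity πL (f W.Δ) = ((dA * r : ℕ) : ℕ∞) := by
    rw [hu₀, map_mul, map_pow, emultiplicity_mul hπLp,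
      emultiplicity_of_isUnit_right hπLp.not_isUnit (u₀.isUnit.map f),
      emultiplicity_pow hπLp, hemfπ, zero_add]
    norm_cast
  have eB : emultiplicity πL (f W.Δ) = ((d' + 3 * m : ℕ) : ℕ∞) := by
    rw [hfΔ, emultiplicity_mul hπLp, hemΔ', emultiplicity_pow hπLp, hems]
    push_cast
    ring
  have hΔeq : dA * r = d' + 3 * m := by
    rw [eA] at eB
    exact_mod_cast eB
  -- final computation
  rw [her, hemΔA, hemΔ']
  by_cases hc4 : W.c₄ = 0
  · -- c₄ = 0 : then W'.c₄ = 0 and semistability forces d' = 0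
    have hc4' : W'.c₄ = 0 := by
      have h := hfc
      rw [hc4, map_zero] at h
      rcases mul_eq_zero.mp h.symm with h' | h'
      · exact h'
      · exact absurd h' hs0
    have hd'0 : d' = 0 := by
      rcases hss with h | h
      · rw [hemΔ'] at h; exact_mod_cast h
      · rw [hc4', emultiplicity_zero] at h; exact absurd h (by simp)
    rw [hc4, emultiplicity_zero, hd'0,
      ENat.mul_top (by exact_mod_cast hr1.ne' : (r : ℕ∞) ≠ 0)]
    simp
  · -- c₄ ≠ 0
    have hfc0 : f W.c₄ ≠ 0 := fun h => hc4 (hinjf (by rw [h, map_zero]))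
    have hc4' : W'.c₄ ≠ 0 := fun h => hfc0 (by rw [hfc, h, zero_mul])
    obtain ⟨cA, u₄, hu₄⟩ := IsDiscreteValuationRing.eq_unit_mul_pow_irreducible hc4 hπ
    obtain ⟨c', u₅, hu₅⟩ := IsDiscreteValuationRing.eq_unit_mul_pow_irreducible hc4' hπL
    have hemcA : emultiplicity π W.c₄ = (cA : ℕ∞) := by
      rw [hu₄]; exact em_isUnit_mul_pow hπp u₄.isUnit cA
    have hemc' : emultiplicity πL W'.c₄ = (c' : ℕ∞) := by
      rw [hu₅]; exact em_isUnit_mul_pow hπLp u₅.isUnit c'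
    have eC : emultiplicity πL (f W.c₄) = ((cA * r : ℕ) : ℕ∞) := by
      rw [hu₄, map_mul, map_pow, emultiplicity_mul hπLp,
        emultiplicity_of_isUnit_right hπLp.not_isUnit (u₄.isUnit.map f),
        emultiplicity_pow hπLp, hemfπ, zero_add]
      norm_cast
    have eD : emultiplicity πL (f W.c₄) = ((c' + m : ℕ) : ℕ∞) := by
      rw [hfc, emultiplicity_mul hπLp, hemc', hems]
      push_cast
      ring
    have hceq : cA * r = c' + m := by
      rw [eC] at eD
      exact_mod_cast eD
    have hd'c' : d' = 0 ∨ c' = 0 := by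
      rcases hss with h | h
      · left; rw [hemΔ'] at h; exact_mod_cast h
      · right; rw [hemc'] at h; exact_mod_cast h
    rw [hemcA]
    exact final_arith r dA d' cA c' m (by rw [mul_comm r dA]; exact hΔeq)
      (by rw [mul_comm r cA]; exact hceq) hd'c'
end

section
/- Suppose O_K has perfect residue field. Let W and W_o be integral Weierstrass equations over O_K whose generic fibers are elliptic curves E and E_o over K. Suppose there exist u ∈ (O_K/π⁶O_K)^× and r, s, t ∈ O_K/π⁶O_K such that the Weierstrass change of variables x = u²x' + r, y = u³y' + u²sx' + t transforms the reduction of W modulo π⁶ into the reduction of W_o modulo π⁶. Then W is a minimal integral Weierstrass equation of E if and only if W_o is a minimal integral Weierstrass equation of E_o. -/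
open WeierstrassCurve

open Polynomial

lemma vc_smul_eq {R} [CommRing R] (C : VariableChange R) (W : WeierstrassCurve R) :
    C • W = C • W := rfl

section
variable (A K : Type*) [CommRing A] [Field K] [IsDomain A] [IsDiscreteValuationRing A]
  [Algebra A K] [IsFractionRing A K]

/-- The five congruence conditions for non-minimality. -/
def Cond (π : A) (W : WeierstrassCurve A) (r s t : A) : Prop :=
  π ∣ (W.a₁ + 2*s) ∧
  π^2 ∣ (W.a₂ - s*W.a₁ + 3*r - s^2) ∧
  π^3 ∣ (W.a₃ + r*W.a₁ + 2*t) ∧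
  π^4 ∣ (W.a₄ - s*W.a₃ + 2*r*W.a₂ - (t + r*s)*W.a₁ + 3*r^2 - 2*s*t) ∧
  π^6 ∣ (W.a₆ + r*W.a₄ + r^2*W.a₂ + r^3 - t*W.a₃ - t^2 - r*t*W.a₁)

variable {A}

theorem nonmin_iff (π : A) (hπ : Irreducible π) (W : WeierstrassCurve A) (hΔ : W.Δ ≠ 0) :
    ¬ IsMinimalModel A K (W.map (algebraMap A K)) W ↔ ∃ r s t : A, Cond A π W r s t := by
  have inj : Function.Injective (algebraMap A K) := IsFractionRing.injective A K
  set φ := algebraMap A K with hφ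
  constructor
  · intro hnot
    have hint : IsIntegralModel A K (W.map φ) W := ⟨1, (one_smul _ _).symm⟩
    have hQ : ¬ ∀ W' : WeierstrassCurve A,
        IsIntegralModel A K (W.map φ) W' → W.Δ ∣ W'.Δ := fun h => hnot ⟨hint, h⟩
    push_neg at hQ
    obtain ⟨W', hW', hnd⟩ := hQ
    obtain ⟨C, hC⟩ := hW'
    have hu0 : (C.u : K) ≠ 0 := C.u.ne_zero
    have huinv : ((C.u⁻¹ : Kˣ) : K) = (C.u : K)⁻¹ := Units.val_inv_eq_inv_val C.u
    -- Δ relation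
    have hΔrel : φ W'.Δ * (C.u : K)^12 = φ W.Δ := by
      have := congrArg WeierstrassCurve.Δ hC
      rw [map_Δ, vc_smul_eq, variableChange_Δ, map_Δ, huinv] at this
      field_simp at this
      exact this
    -- produce c : A with ↑C.u = φ c and π ∣ c
    obtain ⟨a, b, hbmem, hab⟩ := IsFractionRing.div_surjective (A := A) ((C.u : K))
    have hb0 : b ≠ 0 := nonZeroDivisors.ne_zero hbmem
    have hbK : φ b ≠ 0 := fun h => hb0 (inj (by rwa [map_zero]))
    obtain ⟨c, hcu, hπc⟩ : ∃ c : A, (C.u : K) = φ c ∧ π ∣ c := by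
      rcases ValuationRing.dvd_total b a with ⟨c, rfl⟩ | ⟨d, rfl⟩
      · refine ⟨c, ?_, ?_⟩
        · rw [← hab, map_mul, mul_div_cancel_left₀ _ hbK]
        · have hcunit : ¬ IsUnit c := by
            intro hcunit
            obtain ⟨ν, rfl⟩ := hcunit
            apply hnd
            have hA : W.Δ = (ν:A)^12 * W'.Δ := by
              apply inj
              rw [map_mul, map_pow]
              have : φ (ν:A) = (C.u : K) := by
                rw [← hab, map_mul, mul_div_cancel_left₀ _ hbK]
              rw [this, ← hΔrel]; ring
            refine ⟨((ν⁻¹ : Aˣ) : A)^12, ?_⟩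
            rw [hA, mul_comm ((ν:A)^12) W'.Δ, mul_assoc, ← mul_pow, Units.mul_inv,
              one_pow, mul_one]
          have hmem : c ∈ IsLocalRing.maximalIdeal A :=
            (IsLocalRing.mem_maximalIdeal c).mpr (mem_nonunits_iff.mpr hcunit)
          rw [hπ.maximalIdeal_eq] at hmem
          exact Ideal.mem_span_singleton.mp hmem
      · exfalso
        apply hnd
        have hd0 : d ≠ 0 := fun h => hb0 (by rw [h, mul_zero])
        have ha0 : a ≠ 0 := by
          rintro rfl
          exact hu0 (by rw [← hab, map_zero, zero_div])
        have haK : φ a ≠ 0 := fun h => ha0 (inj (by rwa [map_zero]))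
        have hud : (C.u : K) = (φ d)⁻¹ := by
          rw [← hab, map_mul, div_mul_eq_div_div, div_self haK, one_div]
        have hA : W'.Δ = d^12 * W.Δ := by
          apply inj
          rw [map_mul, map_pow, ← hΔrel, hud]
          have hdK : φ d ≠ 0 := fun h => hd0 (inj (by rwa [map_zero]))
          field_simp
        exact ⟨d^12, by rw [hA, mul_comm]⟩
    -- coefficient relations
    have h1 : φ W'.a₁ * (C.u:K) = φ W.a₁ + 2 * C.s := by
      have := congrArg WeierstrassCurve.a₁ hC
      rwa [map_a₁, vc_smul_eq, variableChange_a₁, map_a₁, huinv, inv_mul_eq_div,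
        eq_div_iff hu0] at this
    have h2 : φ W'.a₂ * (C.u:K)^2 = φ W.a₂ - C.s * φ W.a₁ + 3 * C.r - C.s^2 := by
      have := congrArg WeierstrassCurve.a₂ hC
      rwa [map_a₂, vc_smul_eq, variableChange_a₂, map_a₂, map_a₁, huinv, inv_pow,
        inv_mul_eq_div, eq_div_iff (pow_ne_zero 2 hu0)] at this
    have h3 : φ W'.a₃ * (C.u:K)^3 = φ W.a₃ + C.r * φ W.a₁ + 2 * C.t := by
      have := congrArg WeierstrassCurve.a₃ hC
      rwa [map_a₃, vc_smul_eq, variableChange_a₃, map_a₃, map_a₁, huinv, inv_pow,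
        inv_mul_eq_div, eq_div_iff (pow_ne_zero 3 hu0)] at this
    have h4 : φ W'.a₄ * (C.u:K)^4 = φ W.a₄ - C.s * φ W.a₃ + 2 * C.r * φ W.a₂
        - (C.t + C.r * C.s) * φ W.a₁ + 3 * C.r^2 - 2 * C.s * C.t := by
      have := congrArg WeierstrassCurve.a₄ hC
      rwa [map_a₄, vc_smul_eq, variableChange_a₄, map_a₄, map_a₃, map_a₂, map_a₁, huinv,
        inv_pow, inv_mul_eq_div, eq_div_iff (pow_ne_zero 4 hu0)] at this
    have h6 : φ W'.a₆ * (C.u:K)^6 = φ W.a₆ + C.r * φ W.a₄ + C.r^2 * φ W.a₂ + C.r^3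
        - C.t * φ W.a₃ - C.t^2 - C.r * C.t * φ W.a₁ := by
      have := congrArg WeierstrassCurve.a₆ hC
      rwa [map_a₆, vc_smul_eq, variableChange_a₆, map_a₆, map_a₄, map_a₃, map_a₂, map_a₁,
        huinv, inv_pow, inv_mul_eq_div, eq_div_iff (pow_ne_zero 6 hu0)] at this
    have hb6 : φ W'.b₆ * (C.u:K)^6
        = φ W.b₆ + 2 * C.r * φ W.b₄ + C.r^2 * φ W.b₂ + 4 * C.r^3 := by
      have := congrArg WeierstrassCurve.b₆ hC
      rwa [map_b₆, vc_smul_eq, variableChange_b₆, map_b₆, map_b₄, map_b₂, huinv, inv_pow,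
        inv_mul_eq_div, eq_div_iff (pow_ne_zero 6 hu0)] at this
    have hb8 : φ W'.b₈ * (C.u:K)^8 = φ W.b₈ + 3 * C.r * φ W.b₆ + 3 * C.r^2 * φ W.b₄
        + C.r^3 * φ W.b₂ + 3 * C.r^4 := by
      have := congrArg WeierstrassCurve.b₈ hC
      rwa [map_b₈, vc_smul_eq, variableChange_b₈, map_b₈, map_b₆, map_b₄, map_b₂, huinv,
        inv_pow, inv_mul_eq_div, eq_div_iff (pow_ne_zero 8 hu0)] at this
    -- integrality of r
    have hrint : IsIntegral A C.r := by
      refine ⟨X^4 + Polynomial.C (-W.b₄) * X^2 + Polynomial.C (-(2*W.b₆ + c^6*W'.b₆)) * X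
        + Polynomial.C (c^8*W'.b₈ - W.b₈), ?_, ?_⟩
      · monicity!
      · simp only [eval₂_add, eval₂_mul, eval₂_pow, eval₂_X, eval₂_C]
        simp only [map_neg, map_add, map_sub, map_mul, map_pow, map_ofNat]
        rw [← hcu]
        linear_combination (-(C.r)) * hb6 + hb8
    obtain ⟨rA, hrA⟩ := IsIntegrallyClosed.isIntegral_iff.mp hrint
    have hsint : IsIntegral A C.s := by
      refine ⟨X^2 + Polynomial.C W.a₁ * X + Polynomial.C (c^2*W'.a₂ - W.a₂ - 3*rA), ?_, ?_⟩
      · monicity!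
      · simp only [eval₂_add, eval₂_mul, eval₂_pow, eval₂_X, eval₂_C]
        simp only [map_neg, map_add, map_sub, map_mul, map_pow, map_ofNat]
        rw [← hcu, hrA]
        linear_combination h2
    obtain ⟨sA, hsA⟩ := IsIntegrallyClosed.isIntegral_iff.mp hsint
    have htint : IsIntegral A C.t := by
      refine ⟨X^2 + Polynomial.C (W.a₃ + rA*W.a₁) * X
        + Polynomial.C (c^6*W'.a₆ - W.a₆ - rA*W.a₄ - rA^2*W.a₂ - rA^3), ?_, ?_⟩
      · monicity!
      · simp only [eval₂_add, eval₂_mul, eval₂_pow, eval₂_X, eval₂_C]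
        simp only [map_neg, map_add, map_sub, map_mul, map_pow, map_ofNat]
        rw [← hcu, hrA]
        linear_combination h6
    obtain ⟨tA, htA⟩ := IsIntegrallyClosed.isIntegral_iff.mp htint
    refine ⟨rA, sA, tA, ?_, ?_, ?_, ?_, ?_⟩
    · have e : W.a₁ + 2*sA = c * W'.a₁ := by
        apply inj
        simp only [map_add, map_sub, map_mul, map_pow, map_ofNat]
        rw [hsA, ← hcu]
        linear_combination -h1
      rw [e]; exact hπc.mul_right _
    · have e : W.a₂ - sA*W.a₁ + 3*rA - sA^2 = c^2 * W'.a₂ := by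
        apply inj
        simp only [map_add, map_sub, map_mul, map_pow, map_ofNat]
        rw [hsA, hrA, ← hcu]
        linear_combination -h2
      rw [e]; exact (pow_dvd_pow_of_dvd hπc 2).mul_right _
    · have e : W.a₃ + rA*W.a₁ + 2*tA = c^3 * W'.a₃ := by
        apply inj
        simp only [map_add, map_sub, map_mul, map_pow, map_ofNat]
        rw [hrA, htA, ← hcu]
        linear_combination -h3
      rw [e]; exact (pow_dvd_pow_of_dvd hπc 3).mul_right _
    · have e : W.a₄ - sA*W.a₃ + 2*rA*W.a₂ - (tA + rA*sA)*W.a₁ + 3*rA^2 - 2*sA*tA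
          = c^4 * W'.a₄ := by
        apply inj
        simp only [map_add, map_sub, map_mul, map_pow, map_ofNat]
        rw [hsA, hrA, htA, ← hcu]
        linear_combination -h4
      rw [e]; exact (pow_dvd_pow_of_dvd hπc 4).mul_right _
    · have e : W.a₆ + rA*W.a₄ + rA^2*W.a₂ + rA^3 - tA*W.a₃ - tA^2 - rA*tA*W.a₁
          = c^6 * W'.a₆ := by
        apply inj
        simp only [map_add, map_sub, map_mul, map_pow, map_ofNat]
        rw [hrA, htA, ← hcu]
        linear_combination -h6
      rw [e]; exact (pow_dvd_pow_of_dvd hπc 6).mul_right _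
  · rintro ⟨r, s, t, ⟨c1, hc1⟩, ⟨c2, hc2⟩, ⟨c3, hc3⟩, ⟨c4, hc4⟩, ⟨c6, hc6⟩⟩
    rintro ⟨-, hmin⟩
    have hπK : φ π ≠ 0 := fun h => hπ.ne_zero (inj (by rwa [map_zero]))
    have hmap : (⟨c1, c2, c3, c4, c6⟩ : WeierstrassCurve A).map φ
        = (⟨Units.mk0 (φ π) hπK, φ r, φ s, φ t⟩ : VariableChange K) • (W.map φ) := by
      rw [vc_smul_eq]
      ext <;>
        simp only [map_a₁, map_a₂, map_a₃, map_a₄, map_a₆, variableChange_a₁,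
          variableChange_a₂, variableChange_a₃, variableChange_a₄, variableChange_a₆,
          Units.val_inv_eq_inv_val, Units.val_mk0, inv_pow] <;>
        rw [inv_mul_eq_div, eq_div_iff (by first | exact hπK | exact pow_ne_zero _ hπK)]
      · have := congrArg φ hc1
        simp only [map_add, map_mul, map_ofNat, map_pow] at this
        linear_combination -this
      · have := congrArg φ hc2
        simp only [map_add, map_sub, map_mul, map_ofNat, map_pow] at this
        linear_combination -this
      · have := congrArg φ hc3
        simp only [map_add, map_mul, map_ofNat, map_pow] at this
        linear_combination -this
      · have := congrArg φ hc4
        simp only [map_add, map_sub, map_mul, map_ofNat, map_pow] at this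
        linear_combination -this
      · have := congrArg φ hc6
        simp only [map_add, map_sub, map_mul, map_ofNat, map_pow] at this
        linear_combination -this
    have hdvd := hmin _ ⟨_, hmap⟩
    have hΔ2 : π^12 * (⟨c1, c2, c3, c4, c6⟩ : WeierstrassCurve A).Δ = W.Δ := by
      apply inj
      have := congrArg WeierstrassCurve.Δ hmap
      rw [map_Δ, vc_smul_eq, variableChange_Δ, map_Δ] at this
      dsimp only at this
      rw [Units.val_inv_eq_inv_val, Units.val_mk0, inv_pow, inv_mul_eq_div,
        eq_div_iff (pow_ne_zero 12 hπK)] at this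
      simp only [map_mul, map_pow]
      linear_combination this
    obtain ⟨x, hx⟩ := hdvd
    have hW2Δ : (⟨c1, c2, c3, c4, c6⟩ : WeierstrassCurve A).Δ ≠ 0 := by
      intro h; apply hΔ; rw [← hΔ2, h, mul_zero]
    have h1x : (1:A) = π^12 * x :=
      mul_left_cancel₀ hW2Δ (by linear_combination hx - x * hΔ2)
    exact hπ.not_isUnit (isUnit_of_dvd_one ⟨π^11 * x, by linear_combination h1x⟩)

theorem cond_transfer (π : A) (W₁ W₀ : WeierstrassCurve A)
    (hd₁ : π^6 ∣ W₁.a₁ - W₀.a₁) (hd₂ : π^6 ∣ W₁.a₂ - W₀.a₂) (hd₃ : π^6 ∣ W₁.a₃ - W₀.a₃)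
    (hd₄ : π^6 ∣ W₁.a₄ - W₀.a₄) (hd₆ : π^6 ∣ W₁.a₆ - W₀.a₆)
    (r s t : A) (h : Cond A π W₁ r s t) : Cond A π W₀ r s t := by
  obtain ⟨d₁, hd₁⟩ := hd₁; obtain ⟨d₂, hd₂⟩ := hd₂; obtain ⟨d₃, hd₃⟩ := hd₃
  obtain ⟨d₄, hd₄⟩ := hd₄; obtain ⟨d₆, hd₆⟩ := hd₆
  obtain ⟨⟨e₁, he₁⟩, ⟨e₂, he₂⟩, ⟨e₃, he₃⟩, ⟨e₄, he₄⟩, ⟨e₆, he₆⟩⟩ := h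
  refine ⟨⟨e₁ - π^5*d₁, by linear_combination he₁ - hd₁⟩,
    ⟨e₂ - π^4*d₂ + π^4*s*d₁, by linear_combination he₂ - hd₂ + s*hd₁⟩,
    ⟨e₃ - π^3*d₃ - π^3*r*d₁, by linear_combination he₃ - hd₃ - r*hd₁⟩,
    ⟨e₄ + π^2*(-d₄ + s*d₃ - 2*r*d₂ + (t + r*s)*d₁),
      by linear_combination he₄ - hd₄ + s*hd₃ - 2*r*hd₂ + (t + r*s)*hd₁⟩,
    ⟨e₆ - d₆ - r*d₄ - r^2*d₂ + t*d₃ + r*t*d₁,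
      by linear_combination he₆ - hd₆ - r*hd₄ - r^2*hd₂ + t*hd₃ + r*t*hd₁⟩⟩

end


/-- Suppose the discrete valuation ring `A = O_K` has perfect residue field.  Let
`W`, `W₀` be integral Weierstrass equations over `A` whose generic fibers are elliptic
curves over `K`.  Suppose there is a Weierstrass change of variables
`(u, r, s, t)` over `A/π⁶A` (`u` a unit, acting by `x = u²x' + r`,
`y = u³y' + u²sx' + t`) transforming the reduction of `W` modulo `π⁶` into the
reduction of `W₀` modulo `π⁶`.  Then `W` is a minimal integral Weierstrass equation of
its generic fiber if and only if `W₀` is. -/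
theorem minimality_determined_mod_pi_six
    (A K : Type*) [CommRing A] [Field K]
    [IsDomain A] [IsDiscreteValuationRing A]
    [PerfectField (IsLocalRing.ResidueField A)]
    [Algebra A K] [IsFractionRing A K]
    (π : A) (hπ : Irreducible π)
    (W W₀ : WeierstrassCurve A)
    (hW : (W.map (algebraMap A K)).Δ ≠ 0)
    (hW₀ : (W₀.map (algebraMap A K)).Δ ≠ 0)
    (hcongr : ∃ C : VariableChange (A ⧸ Ideal.span {π ^ 6}),
      C • (W.map (Ideal.Quotient.mk (Ideal.span {π ^ 6}))) =
        W₀.map (Ideal.Quotient.mk (Ideal.span {π ^ 6}))) :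
    IsMinimalModel A K (W.map (algebraMap A K)) W ↔
      IsMinimalModel A K (W₀.map (algebraMap A K)) W₀ := by
  have inj : Function.Injective (algebraMap A K) := IsFractionRing.injective A K
  set φ := algebraMap A K with hφ
  have hΔA : W.Δ ≠ 0 := fun h => hW (by rw [map_Δ, h, map_zero])
  have hΔA₀ : W₀.Δ ≠ 0 := fun h => hW₀ (by rw [map_Δ, h, map_zero])
  set I : Ideal A := Ideal.span {π ^ 6} with hI
  set mk : A →+* A ⧸ I := Ideal.Quotient.mk I with hmk
  obtain ⟨C, hC⟩ := hcongr
  obtain ⟨u₀, hu₀⟩ := Ideal.Quotient.mk_surjective (C.u : A ⧸ I)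
  obtain ⟨y, hy⟩ := Ideal.Quotient.mk_surjective ((C.u⁻¹ : (A ⧸ I)ˣ) : A ⧸ I)
  obtain ⟨r₀, hr₀⟩ := Ideal.Quotient.mk_surjective C.r
  obtain ⟨s₀, hs₀⟩ := Ideal.Quotient.mk_surjective C.s
  obtain ⟨t₀, ht₀⟩ := Ideal.Quotient.mk_surjective C.t
  have hone : mk (u₀ * y) = mk 1 := by
    rw [map_mul, map_one]
    rw [hmk, hu₀, hy]
    exact C.u.mul_inv
  obtain ⟨z, hz⟩ :=
    Ideal.mem_span_singleton.mp ((Ideal.Quotient.mk_eq_mk_iff_sub_mem _ _).mp hone)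
  have huu : IsUnit u₀ := by
    apply isUnit_of_mul_isUnit_left (y := y)
    rw [show u₀ * y = 1 - (-(π^6*z)) by linear_combination hz]
    apply IsLocalRing.isUnit_one_sub_self_of_mem_nonunits
    rw [mem_nonunits_iff]
    intro hun
    exact hπ.not_isUnit (isUnit_of_dvd_unit ⟨-(π^5*z), by ring⟩ hun)
  set Cl : VariableChange A := ⟨huu.unit, r₀, s₀, t₀⟩ with hCldef
  have hCl : Cl.map mk = C := by
    ext <;> simp [hCldef, VariableChange.map, hr₀, hs₀, ht₀]
    exacts [hu₀, hr₀, hs₀, ht₀]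
  set W₁ : WeierstrassCurve A := Cl • W with hW₁
  have hW₁mod : W₁.map mk = W₀.map mk := by
    rw [hW₁, ← map_variableChange, hCl, ← vc_smul_eq, hC]
  have hd₁ : π^6 ∣ W₁.a₁ - W₀.a₁ := by
    have := congrArg WeierstrassCurve.a₁ hW₁mod
    rw [map_a₁, map_a₁] at this
    exact Ideal.mem_span_singleton.mp ((Ideal.Quotient.mk_eq_mk_iff_sub_mem _ _).mp this)
  have hd₂ : π^6 ∣ W₁.a₂ - W₀.a₂ := by
    have := congrArg WeierstrassCurve.a₂ hW₁mod
    rw [map_a₂, map_a₂] at this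
    exact Ideal.mem_span_singleton.mp ((Ideal.Quotient.mk_eq_mk_iff_sub_mem _ _).mp this)
  have hd₃ : π^6 ∣ W₁.a₃ - W₀.a₃ := by
    have := congrArg WeierstrassCurve.a₃ hW₁mod
    rw [map_a₃, map_a₃] at this
    exact Ideal.mem_span_singleton.mp ((Ideal.Quotient.mk_eq_mk_iff_sub_mem _ _).mp this)
  have hd₄ : π^6 ∣ W₁.a₄ - W₀.a₄ := by
    have := congrArg WeierstrassCurve.a₄ hW₁mod
    rw [map_a₄, map_a₄] at this
    exact Ideal.mem_span_singleton.mp ((Ideal.Quotient.mk_eq_mk_iff_sub_mem _ _).mp this)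
  have hd₆ : π^6 ∣ W₁.a₆ - W₀.a₆ := by
    have := congrArg WeierstrassCurve.a₆ hW₁mod
    rw [map_a₆, map_a₆] at this
    exact Ideal.mem_span_singleton.mp ((Ideal.Quotient.mk_eq_mk_iff_sub_mem _ _).mp this)
  have hΔ₁eq : W₁.Δ = (↑(Cl.u⁻¹):A)^12 * W.Δ := variableChange_Δ W Cl
  have hassoc : Associated W.Δ W₁.Δ :=
    ⟨Cl.u⁻¹^12, by rw [hΔ₁eq, Units.val_pow_eq_pow_val, mul_comm]⟩
  have hΔ₁ : W₁.Δ ≠ 0 := by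
    rw [hΔ₁eq]
    exact mul_ne_zero (pow_ne_zero _ (Units.ne_zero _)) hΔA
  have hE₁ : W₁.map φ = (Cl.map φ) • (W.map φ) := by
    rw [vc_smul_eq, map_variableChange]
  have hiff : ∀ X : WeierstrassCurve A,
      IsIntegralModel A K (W.map φ) X ↔ IsIntegralModel A K (W₁.map φ) X := by
    intro X
    constructor
    · rintro ⟨D, hD⟩
      exact ⟨D * (Cl.map φ)⁻¹, by rw [hD, hE₁, mul_smul, inv_smul_smul]⟩
    · rintro ⟨D, hD⟩
      exact ⟨D * (Cl.map φ), by rw [hD, hE₁, mul_smul]⟩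
  have hmin1 : IsMinimalModel A K (W.map φ) W ↔ IsMinimalModel A K (W₁.map φ) W₁ := by
    constructor
    · rintro ⟨-, h⟩
      exact ⟨⟨1, (one_smul _ _).symm⟩,
        fun X hX => (hassoc.dvd_iff_dvd_left).mp (h X ((hiff X).mpr hX))⟩
    · rintro ⟨-, h⟩
      exact ⟨⟨1, (one_smul _ _).symm⟩,
        fun X hX => (hassoc.dvd_iff_dvd_left).mpr (h X ((hiff X).mp hX))⟩
  rw [hmin1, ← not_iff_not, nonmin_iff K π hπ W₁ hΔ₁, nonmin_iff K π hπ W₀ hΔA₀]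
  constructor
  · rintro ⟨r, s, t, hc⟩
    exact ⟨r, s, t, cond_transfer π W₁ W₀ hd₁ hd₂ hd₃ hd₄ hd₆ r s t hc⟩
  · rintro ⟨r, s, t, hc⟩
    exact ⟨r, s, t, cond_transfer π W₀ W₁ (dvd_sub_comm.mp hd₁) (dvd_sub_comm.mp hd₂)
      (dvd_sub_comm.mp hd₃) (dvd_sub_comm.mp hd₄) (dvd_sub_comm.mp hd₆) r s t hc⟩
end

section
/- Let O_K be a discrete valuation ring with uniformizer π, let A be a Noetherian O_K-algebra, and let J ⊆ A be an ideal such that A/J is flat (equivalently, torsion-free) over O_K and every element of J is killed by a power of π (i.e. J ⊗_{O_K} K = 0). Then: (1) J equals the π-power-torsion ideal of A, and there exists c ≥ 0 with J = A[π^c] := {a ∈ A : π^c a = 0}; (2) for every N ≥ 0, the natural surjection A/π^{N+c+1}A → (A/J)/π^{N+1}(A/J) induces an isomorphism (A/π^{N+c+1}A)/((A/π^{N+c+1}A)[π^c]) ≅ (A/J)/π^{N+1}(A/J), where (A/π^{N+c+1}A)[π^c] denotes the ideal of elements killed by π^c. -/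
/-- A flat module over a domain is torsion-free. -/
lemma flat_smul_eq_zero_aux {A : Type*} [CommRing A] [IsDomain A]
    {M : Type*} [AddCommGroup M] [Module A M] [Module.Flat A M]
    {a : A} (ha : a ≠ 0) {m : M} (h : a • m = 0) : m = 0 := by
  have hf : Function.Injective (LinearMap.lsmul A A a) := by
    intro b₁ b₂ hb
    simp only [LinearMap.lsmul_apply, smul_eq_mul] at hb
    exact mul_left_cancel₀ ha hb
  have hinj := Module.Flat.lTensor_preserves_injective_linearMap
    (M := M) (LinearMap.lsmul A A a) hf
  have h1 : (LinearMap.lTensor M (LinearMap.lsmul A A a)) (m ⊗ₜ[A] (1 : A))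
      = m ⊗ₜ[A] a := by
    simp [LinearMap.lTensor_tmul]
  have h2 : (TensorProduct.rid A M) (m ⊗ₜ[A] a) = 0 := by
    simpa using h
  have h3 : (m ⊗ₜ[A] a : TensorProduct A M A) = 0 :=
    (TensorProduct.rid A M).injective (by simpa using h2)
  have h4 : (m ⊗ₜ[A] (1 : A) : TensorProduct A M A) = 0 := by
    apply hinj
    rw [h1, h3, map_zero]
  have := congrArg (TensorProduct.rid A M) h4
  simpa using this

/-- Let `A = O_K` be a discrete valuation ring with uniformizer `π`, `R` a Noetherian
`A`-algebra, and `J ⊆ R` an ideal such that `R/J` is flat over `A` and every element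
of `J` is killed by a power of `π`.  Then:
(1) `J` equals the `π`-power-torsion ideal of `R`, and there exists `c ≥ 0` with
    `J = R[π^c] = { a ∈ R : π^c a = 0 }`;
(2) for every `N ≥ 0`, the natural surjection
    `R/π^{N+c+1}R → (R/J)/π^{N+1}(R/J)` induces an isomorphism
    `(R/π^{N+c+1}R)/((R/π^{N+c+1}R)[π^c]) ≅ (R/J)/π^{N+1}(R/J)`, i.e. the natural
    map is surjective with kernel the `π^c`-torsion ideal. -/
theorem torsion_ideal_deformation
    (A : Type*) [CommRing A] [IsDomain A] [IsDiscreteValuationRing A]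
    (π : A) (hπ : Irreducible π)
    (R : Type*) [CommRing R] [Algebra A R] [IsNoetherianRing R]
    (J : Ideal R)
    (hflat : Module.Flat A (R ⧸ J))
    (htors : ∀ x ∈ J, ∃ n : ℕ, π ^ n • x = 0) :
    (∀ x : R, x ∈ J ↔ ∃ n : ℕ, π ^ n • x = 0) ∧
      ∃ c : ℕ, (∀ x : R, x ∈ J ↔ π ^ c • x = 0) ∧
        ∀ N : ℕ,
          ∀ Φ : (R ⧸ Ideal.span {algebraMap A R π ^ (N + c + 1)}) →+*
            ((R ⧸ J) ⧸ Ideal.span {algebraMap A (R ⧸ J) π ^ (N + 1)}),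
          (∀ r : R, Φ (Ideal.Quotient.mk _ r) =
              Ideal.Quotient.mk _ (Ideal.Quotient.mk J r)) →
          Function.Surjective Φ ∧ ∀ x, Φ x = 0 ↔ π ^ c • x = 0 := by
  classical
  -- torsion implies membership in J
  have hmem : ∀ x : R, (∃ n : ℕ, π ^ n • x = 0) → x ∈ J := by
    rintro x ⟨n, hn⟩
    have hq : (π ^ n : A) • (Ideal.Quotient.mk J x) = 0 := by
      have : (π ^ n : A) • (Ideal.Quotient.mk J x)
          = Ideal.Quotient.mk J (π ^ n • x) := by
        rw [Algebra.smul_def, Algebra.smul_def, ← Ideal.Quotient.mk_algebraMap,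
          ← map_mul]
      rw [this, hn, map_zero]
    have hne : (π ^ n : A) ≠ 0 := pow_ne_zero n hπ.ne_zero
    have := flat_smul_eq_zero_aux hne hq
    rwa [Ideal.Quotient.eq_zero_iff_mem] at this
  have h1 : ∀ x : R, x ∈ J ↔ ∃ n : ℕ, π ^ n • x = 0 :=
    fun x => ⟨htors x, hmem x⟩
  -- find a uniform bound c
  have key : ∃ c : ℕ, ∀ x ∈ J, π ^ c • x = 0 := by
    obtain ⟨S, hS⟩ := IsNoetherian.noetherian J
    let n : R → ℕ := fun s =>
      if h : ∃ m : ℕ, π ^ m • s = 0 then h.choose else 0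
    refine ⟨S.sup n, ?_⟩
    have hgen : ∀ s ∈ S, π ^ (S.sup n) • s = 0 := by
      intro s hs
      have hsJ : s ∈ J := by
        rw [← hS]; exact Ideal.subset_span hs
      have hex : ∃ m : ℕ, π ^ m • s = 0 := htors s hsJ
      have hns : π ^ (n s) • s = 0 := by
        simp only [n, dif_pos hex]
        exact hex.choose_spec
      have hle : n s ≤ S.sup n := Finset.le_sup hs
      calc π ^ (S.sup n) • s = (π ^ (S.sup n - n s) * π ^ (n s)) • s := by
            rw [← pow_add, Nat.sub_add_cancel hle]
        _ = π ^ (S.sup n - n s) • (π ^ (n s) • s) := by rw [mul_smul]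
        _ = 0 := by rw [hns, smul_zero]
    intro x hx
    rw [← hS] at hx
    induction hx using Submodule.span_induction with
    | mem s hs => exact hgen s hs
    | zero => simp
    | add y z _ _ hy hz => rw [smul_add, hy, hz, add_zero]
    | smul r y _ hy =>
      rw [smul_comm, hy, smul_zero]
  obtain ⟨c, hc⟩ := key
  have h2 : ∀ x : R, x ∈ J ↔ π ^ c • x = 0 :=
    fun x => ⟨hc x, fun h => hmem x ⟨c, h⟩⟩
  refine ⟨h1, c, h2, ?_⟩
  intro N Φ hΦ
  constructor
  · intro y
    obtain ⟨z, rfl⟩ := Ideal.Quotient.mk_surjective y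
    obtain ⟨r, rfl⟩ := Ideal.Quotient.mk_surjective z
    exact ⟨Ideal.Quotient.mk _ r, hΦ r⟩
  · intro x
    obtain ⟨r, rfl⟩ := Ideal.Quotient.mk_surjective x
    rw [hΦ r]
    set I := Ideal.span {algebraMap A R π ^ (N + c + 1)} with hI
    have hsmul : (π ^ c : A) • (Ideal.Quotient.mk I r)
        = Ideal.Quotient.mk I (π ^ c • r) := by
      rw [Algebra.smul_def, Algebra.smul_def, ← Ideal.Quotient.mk_algebraMap,
        ← map_mul]
    rw [hsmul, Ideal.Quotient.eq_zero_iff_mem, Ideal.Quotient.eq_zero_iff_mem,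
      Ideal.mem_span_singleton, Ideal.mem_span_singleton]
    constructor
    · rintro ⟨t, ht⟩
      obtain ⟨s, rfl⟩ := Ideal.Quotient.mk_surjective t
      have : Ideal.Quotient.mk J (r - algebraMap A R π ^ (N + 1) * s) = 0 := by
        rw [map_sub, sub_eq_zero, ht, map_mul, map_pow, Ideal.Quotient.mk_algebraMap]
      rw [Ideal.Quotient.eq_zero_iff_mem] at this
      have h0 : π ^ c • (r - algebraMap A R π ^ (N + 1) * s) = 0 := hc _ this
      refine ⟨s, ?_⟩
      have : π ^ c • r = π ^ c • (algebraMap A R π ^ (N + 1) * s) := by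
        rw [← sub_eq_zero, ← smul_sub]; exact h0
      rw [this, Algebra.smul_def, map_pow]
      ring
    · rintro ⟨s, hs⟩
      have h0 : π ^ c • (r - algebraMap A R π ^ (N + 1) * s) = 0 := by
        rw [smul_sub, hs, Algebra.smul_def, map_pow, sub_eq_zero]
        ring
      have hrJ : r - algebraMap A R π ^ (N + 1) * s ∈ J := hmem _ ⟨c, h0⟩
      refine ⟨Ideal.Quotient.mk J s, ?_⟩
      have : Ideal.Quotient.mk J (r - algebraMap A R π ^ (N + 1) * s) = 0 :=
        (Ideal.Quotient.eq_zero_iff_mem).2 hrJ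
      rw [map_sub, sub_eq_zero] at this
      rw [this, map_mul, map_pow, Ideal.Quotient.mk_algebraMap]
end
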